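/- arXiv:1308.3810 — 7 statements merged into one kernel-verified Lean document; each statement's English description precedes it below -/
import Mathlib

section
/- Every (r,s)-formation on at least (r-1)^(2^(s-1))+1 distinct letters contains a binary (r,s)-formation. That is, if F is a concatenation of s permutations of a set of (r-1)^(2^(s-1))+1 distinct letters, then there exist r of those letters and a linear order p on them such that F has a subsequence which is a concatenation of s sequences, each being either p or the reverse of p. -/
/-- The increasing sequence `1 2 ... c`. -/
def Ic (c : ℕ) : List ℕ := List.range' 1 c

/-- The decreasing sequence `c (c-1) ... 1`. -/
def Dc (c : ℕ) : List ℕ := (Ic c).reverse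

/-- `k` concatenated copies of the list `l`. -/
def rep (l : List ℕ) (k : ℕ) : List ℕ := (List.replicate k l).flatten

/-- `up(c,t)`: the sequence `1 2 ... c` repeated `t` times. -/
def upSeq (c t : ℕ) : List ℕ := rep (Ic c) t

/-- `alt(c,k)`: the concatenation of `k` permutations alternating `I_c, D_c, I_c, ...`. -/
def altSeq (c k : ℕ) : List ℕ :=
  ((List.range k).map (fun i => if i % 2 = 0 then Ic c else Dc c)).flatten

/-- A sequence `s` contains `u` if some subsequence of `s` is obtained from `u`
by an injective renaming of its letters. -/
def Contains (s u : List ℕ) : Prop :=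
  ∃ f : ℕ → ℕ, Function.Injective f ∧ (u.map f).Sublist s

/-- `F` is an `(r,s)`-formation: a concatenation of `s` permutations of a set of
`r` distinct letters. -/
def IsFormation (r s : ℕ) (F : List ℕ) : Prop :=
  ∃ (A : Finset ℕ) (ps : List (List ℕ)), A.card = r ∧ ps.length = s ∧
    (∀ p ∈ ps, p.Nodup ∧ p.toFinset = A) ∧ F = ps.flatten

/-- `F` is a binary `(r,s)`-formation: an `(r,s)`-formation in which every
constituent permutation equals a fixed permutation `p` or its reverse. -/
def IsBinaryFormation (r s : ℕ) (F : List ℕ) : Prop :=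
  ∃ (A : Finset ℕ) (p : List ℕ) (ps : List (List ℕ)), A.card = r ∧
    p.Nodup ∧ p.toFinset = A ∧ ps.length = s ∧
    (∀ q ∈ ps, q = p ∨ q = p.reverse) ∧ F = ps.flatten

/-- The formation width of `u`: the minimum `s` such that there exists `r` for which
every `(r,s)`-formation contains `u`. -/
noncomputable def fw (u : List ℕ) : ℕ :=
  sInf {s | ∃ r, ∀ F, IsFormation r s F → Contains F u}

/-- The formation length of `u`: the minimum `r` such that every `(r, fw u)`-formation
contains `u`. -/
noncomputable def fl (u : List ℕ) : ℕ :=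
  sInf {r | ∀ F, IsFormation r (fw u) F → Contains F u}

/-- For a permutation `π` of `{1,...,c}`, the sequence `I_π = π(1) π(2) ... π(c)`. -/
def Iperm {c : ℕ} (π : Equiv.Perm (Fin c)) : List ℕ :=
  List.ofFn (fun i => (π i).val + 1)

/-- `l(u)` for a sequence `u` on letters `1,...,c`: the smallest `k` such that
`up(c,k)` contains `u`. -/
noncomputable def lval (c : ℕ) (u : List ℕ) : ℕ := sInf {k | Contains (upSeq c k) u}

/-- `r(u)` for a sequence `u` on letters `1,...,c`: the smallest `k` such that
`alt(c,k)` contains `u`. -/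
noncomputable def rval (c : ℕ) (u : List ℕ) : ℕ := sInf {k | Contains (altSeq c k) u}

/-- The binary formation `I_c^{e_1} D_c^{e_2} I_c^{e_3} ...` determined by the list
of exponents `e` (blocks alternate starting with `I_c`). -/
def altBlocks (c : ℕ) (e : List ℕ) : List ℕ :=
  ((e.zipIdx.map Prod.swap).map (fun p => rep (if p.1 % 2 = 0 then Ic c else Dc c) p.2)).flatten

namespace Stmt0Aux

open Function Finset

/-- **Erdős–Szekeres Theorem** (copied from the Mathlib archive). -/
theorem erdos_szekeres {α : Type*} [LinearOrder α] {r s n : ℕ} {f : Fin n → α}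
    (hn : r * s < n) (hf : Injective f) :
    (∃ t : Finset (Fin n), r < #t ∧ StrictMonoOn f ↑t) ∨
      ∃ t : Finset (Fin n), s < #t ∧ StrictAntiOn f ↑t := by
  let inc_sequences_ending_in : Fin n → Finset (Finset (Fin n)) := fun i =>
    univ.powerset.filter fun t => Finset.max t = i ∧ StrictMonoOn f ↑t
  let dec_sequences_ending_in : Fin n → Finset (Finset (Fin n)) := fun i =>
    univ.powerset.filter fun t => Finset.max t = i ∧ StrictAntiOn f ↑t
  have inc_i : ∀ i, {i} ∈ inc_sequences_ending_in i := fun i => by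
    simp [inc_sequences_ending_in, StrictMonoOn]
  have dec_i : ∀ i, {i} ∈ dec_sequences_ending_in i := fun i => by
    simp [dec_sequences_ending_in, StrictAntiOn]
  let ab' : Fin n → ℕ × ℕ := by
    intro i
    apply
      (max' ((inc_sequences_ending_in i).image card) (Nonempty.image ⟨{i}, inc_i i⟩ _),
        max' ((dec_sequences_ending_in i).image card) (Nonempty.image ⟨{i}, dec_i i⟩ _))
  generalize hab : ab' = ab
  rsuffices ⟨i, hi⟩ : ∃ i, r < (ab i).1 ∨ s < (ab i).2
  · refine Or.imp ?_ ?_ hi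
    on_goal 1 =>
      have : (ab i).1 ∈ image card (inc_sequences_ending_in i) := by
        simp only [← hab]; exact max'_mem _ (Nonempty.image ⟨{i}, inc_i i⟩ _)
    on_goal 2 =>
      have : (ab i).2 ∈ image card (dec_sequences_ending_in i) := by
        simp only [← hab]; exact max'_mem _ (Nonempty.image ⟨{i}, dec_i i⟩ _)
    all_goals
      intro hi
      rw [mem_image] at this
      obtain ⟨t, ht₁, ht₂⟩ := this
      refine ⟨t, by rwa [ht₂], ?_⟩
      rw [mem_filter] at ht₁
      apply ht₁.2.2
  have : Injective ab := by
    simp only [← hab]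
    apply Injective.of_lt_imp_ne
    intro i j k q
    injection q with q₁ q₂
    cases lt_or_gt_of_ne fun _ => ne_of_lt ‹i < j› (hf ‹f i = f j›)
    on_goal 1 =>
      apply ne_of_lt _ q₁
      have : (ab' i).1 ∈ image card (inc_sequences_ending_in i) := by exact max'_mem _ (Nonempty.image ⟨{i}, inc_i i⟩ _)
    on_goal 2 =>
      apply ne_of_lt _ q₂
      have : (ab' i).2 ∈ image card (dec_sequences_ending_in i) := by exact max'_mem _ (Nonempty.image ⟨{i}, dec_i i⟩ _)
    all_goals
      rw [Nat.lt_iff_add_one_le]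
      apply le_max'
      rw [mem_image] at this ⊢
      rcases this with ⟨t, ht₁, ht₂⟩
      rw [mem_filter] at ht₁
      have : t.max = i := by simp only [ht₁.2.1]
      refine ⟨insert j t, ?_, ?_⟩
      · rw [mem_filter]
        refine ⟨?_, ?_, ?_⟩
        · rw [mem_powerset]; apply subset_univ
        · convert max_insert (a := j) (s := t)
          rw [ht₁.2.1, max_eq_left]
          apply WithBot.coe_le_coe.mpr (le_of_lt ‹i < j›)
        simp only [StrictMonoOn, StrictAntiOn, coe_insert, Set.mem_insert_iff, mem_coe]
        rintro x ⟨rfl | _⟩ y ⟨rfl | _⟩ _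
        · apply (irrefl _ ‹j < j›).elim
        · exfalso
          apply not_le_of_gt (_root_.trans ‹i < j› ‹j < y›) (le_max_of_eq ‹y ∈ t› ‹t.max = i›)
        · first
          | apply lt_of_le_of_lt _ ‹f i < f j›
          | apply lt_of_lt_of_le ‹f j < f i› _
          rcases lt_or_eq_of_le (le_max_of_eq ‹x ∈ t› ‹t.max = i›) with (_ | rfl)
          · apply le_of_lt (ht₁.2.2 ‹x ∈ t› (mem_of_max ‹t.max = i›) ‹x < i›)
          · rfl
        · apply ht₁.2.2 ‹x ∈ t› ‹y ∈ t› ‹x < y›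
      · rw [card_insert_of_notMem, ht₂]
        intro
        apply not_le_of_gt ‹i < j› (le_max_of_eq ‹j ∈ t› ‹t.max = i›)
  by_contra! q
  let ran : Finset (ℕ × ℕ) := (range r).image Nat.succ ×ˢ (range s).image Nat.succ
  have : image ab univ ⊆ ran := by
    rintro ⟨x₁, x₂⟩
    simp only [ran, mem_image, exists_prop, mem_range, mem_univ, mem_product, true_and,
      Prod.ext_iff]
    rintro ⟨i, rfl, rfl⟩
    specialize q i
    have z : 1 ≤ (ab i).1 ∧ 1 ≤ (ab i).2 := by
      simp only [← hab]
      constructor <;>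
        · apply le_max'
          rw [mem_image]
          exact ⟨{i}, by solve_by_elim, card_singleton i⟩
    exact ⟨⟨(ab i).1 - 1, by omega⟩, (ab i).2 - 1, by omega⟩
  apply not_le_of_gt hn
  simpa [ran, Nat.succ_injective, card_image_of_injective, ‹Injective ab›] using card_le_card this

/-- The restriction of a list to the letters in `C`. -/
def restr (q : List ℕ) (C : Finset ℕ) : List ℕ := q.filter (fun x => x ∈ C)

lemma mem_restr {q : List ℕ} {C : Finset ℕ} {x : ℕ} :
    x ∈ restr q C ↔ x ∈ q ∧ x ∈ C := by
  simp [restr]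

lemma restr_sublist (q : List ℕ) (C : Finset ℕ) : (restr q C).Sublist q :=
  List.filter_sublist

lemma restr_nodup {q : List ℕ} (h : q.Nodup) (C : Finset ℕ) : (restr q C).Nodup :=
  h.filter _

lemma restr_restr (q : List ℕ) {B C : Finset ℕ} (h : C ⊆ B) :
    restr (restr q B) C = restr q C := by
  induction q with
  | nil => rfl
  | cons a t ih =>
    by_cases hC : a ∈ C
    · have hB : a ∈ B := h hC
      simp [restr, List.filter_cons, hB, hC] at ih ⊢
      exact ih
    · by_cases hB : a ∈ B <;> simp [restr, List.filter_cons, hB, hC] at ih ⊢ <;> exact ih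

lemma restr_sublist_of_subset (q : List ℕ) {B C : Finset ℕ} (h : C ⊆ B) :
    (restr q C).Sublist (restr q B) := by
  rw [← restr_restr q h]; exact restr_sublist _ _

lemma restr_toFinset {q : List ℕ} {C : Finset ℕ} (h : ∀ x ∈ C, x ∈ q) :
    (restr q C).toFinset = C := by
  ext x
  simp only [List.mem_toFinset, mem_restr]
  exact ⟨fun h' => h'.2, fun hx => ⟨h x hx, hx⟩⟩

/-- `l` is increasing with respect to the key `key`. -/
def IncK (key : ℕ → ℕ) (l : List ℕ) : Prop := l.Pairwise fun a b => key a < key b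

/-- `l` is decreasing with respect to the key `key`. -/
def DecK (key : ℕ → ℕ) (l : List ℕ) : Prop := l.Pairwise fun a b => key b < key a

lemma nodup_pairwise_indexOf {l : List ℕ} (h : l.Nodup) :
    l.Pairwise fun a b => List.idxOf a l < List.idxOf b l := by
  rw [List.pairwise_iff_getElem]
  intro i j hi hj hij
  rw [h.idxOf_getElem i hi, h.idxOf_getElem j hj]
  exact hij

lemma extract (q' : List ℕ) (hnq' : q'.Nodup) (R : ℕ → ℕ → Prop)
    (t : Finset (Fin q'.length))
    (hR : ∀ i ∈ t, ∀ j ∈ t, i < j → R (q'.get i) (q'.get j)) :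
    (restr q' (t.image fun i => q'.get i)).Pairwise R := by
  set C := t.image fun i => q'.get i with hC
  have base : (restr q' C).Pairwise (fun a b => List.idxOf a q' < List.idxOf b q') :=
    (nodup_pairwise_indexOf hnq').sublist (restr_sublist _ _)
  refine base.imp_of_mem ?_
  intro a b ha hb hab
  obtain ⟨i, hi, rfl⟩ : ∃ i ∈ t, q'.get i = a := by
    have : a ∈ C := (mem_restr.1 ha).2
    simpa [hC, Finset.mem_image] using this
  obtain ⟨j, hj, rfl⟩ : ∃ j ∈ t, q'.get j = b := by
    have : b ∈ C := (mem_restr.1 hb).2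
    simpa [hC, Finset.mem_image] using this
  have hia : List.idxOf (q'.get i) q' = i := List.Nodup.idxOf_getElem hnq' i i.isLt
  have hjb : List.idxOf (q'.get j) q' = j := List.Nodup.idxOf_getElem hnq' j j.isLt
  rw [hia, hjb] at hab
  exact hR i hi j hj (Fin.lt_def.2 hab)

lemma es_step (n : ℕ) (key : ℕ → ℕ) (q : List ℕ) (hq : q.Nodup) (B : Finset ℕ)
    (hBq : ∀ x ∈ B, x ∈ q)
    (hkey : ∀ x ∈ B, ∀ y ∈ B, key x = key y → x = y)
    (hcard : n * n < B.card) :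
    ∃ C, C ⊆ B ∧ C.card = n + 1 ∧ (IncK key (restr q C) ∨ DecK key (restr q C)) := by
  set q' := restr q B with hq'def
  have hnq' : q'.Nodup := restr_nodup hq B
  have htf : q'.toFinset = B := restr_toFinset hBq
  have hlen : n * n < q'.length := by
    rw [← List.toFinset_card_of_nodup hnq', htf]; exact hcard
  have hmemB : ∀ i : Fin q'.length, q'.get i ∈ B := fun i =>
    htf ▸ List.mem_toFinset.2 (List.get_mem q' i)
  have hget : Injective q'.get := List.nodup_iff_injective_get.1 hnq'
  have hfinj : Injective fun i : Fin q'.length => key (q'.get i) := by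
    intro i j hij
    exact hget (hkey _ (hmemB i) _ (hmemB j) hij)
  have hmain : ∀ (t : Finset (Fin q'.length)), t.card = n + 1 →
      ∀ R : ℕ → ℕ → Prop,
      (∀ i ∈ t, ∀ j ∈ t, i < j → R (q'.get i) (q'.get j)) →
      ∃ C, C ⊆ B ∧ C.card = n + 1 ∧ (restr q C).Pairwise R := by
    intro t htcard R hR
    refine ⟨t.image fun i => q'.get i, ?_, ?_, ?_⟩
    · intro x hx
      obtain ⟨i, _, rfl⟩ := Finset.mem_image.1 hx
      exact hmemB i
    · rw [Finset.card_image_of_injective _ hget, htcard]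
    · have hsub : (t.image fun i => q'.get i) ⊆ B := by
        intro x hx
        obtain ⟨i, _, rfl⟩ := Finset.mem_image.1 hx
        exact hmemB i
      have := extract q' hnq' R t hR
      rwa [show restr q' (t.image fun i => q'.get i) = restr q (t.image fun i => q'.get i) from
        restr_restr q hsub] at this
  rcases erdos_szekeres (r := n) (s := n) hlen hfinj with ⟨t, ht, hmono⟩ | ⟨t, ht, hmono⟩
  · obtain ⟨t', ht't, ht'card⟩ := Finset.exists_subset_card_eq (Nat.succ_le_of_lt ht)
    obtain ⟨C, h1, h2, h3⟩ := hmain t' ht'card (fun a b => key a < key b)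
      (fun i hi j hj hij => hmono (Finset.mem_coe.2 (ht't hi)) (Finset.mem_coe.2 (ht't hj)) hij)
    exact ⟨C, h1, h2, Or.inl h3⟩
  · obtain ⟨t', ht't, ht'card⟩ := Finset.exists_subset_card_eq (Nat.succ_le_of_lt ht)
    obtain ⟨C, h1, h2, h3⟩ := hmain t' ht'card (fun a b => key b < key a)
      (fun i hi j hj hij => hmono (Finset.mem_coe.2 (ht't hi)) (Finset.mem_coe.2 (ht't hj)) hij)
    exact ⟨C, h1, h2, Or.inr h3⟩

lemma main_lemma (m : ℕ) (key : ℕ → ℕ) :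
    ∀ (qs : List (List ℕ)) (B : Finset ℕ),
      (∀ x ∈ B, ∀ y ∈ B, key x = key y → x = y) →
      (∀ q ∈ qs, q.Nodup ∧ ∀ x ∈ B, x ∈ q) →
      m ^ 2 ^ qs.length < B.card →
      ∃ C, C ⊆ B ∧ C.card = m + 1 ∧
        ∀ q ∈ qs, IncK key (restr q C) ∨ DecK key (restr q C) := by
  intro qs
  induction qs with
  | nil =>
    intro B _ _ hcard
    have : m + 1 ≤ B.card := by simpa using hcard
    obtain ⟨C, hCB, hC⟩ := Finset.exists_subset_card_eq this
    exact ⟨C, hCB, hC, by simp⟩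
  | cons q qs ih =>
    intro B hkey hqs hcard
    have h1 : m ^ 2 ^ qs.length * m ^ 2 ^ qs.length < B.card := by
      have h2 : m ^ 2 ^ (q :: qs).length = m ^ 2 ^ qs.length * m ^ 2 ^ qs.length := by
        rw [List.length_cons, pow_succ, pow_mul, sq]
      rwa [h2] at hcard
    obtain ⟨C₁, hC₁B, hC₁card, hmono⟩ :=
      es_step (m ^ 2 ^ qs.length) key q (hqs q (List.mem_cons_self)).1 B
        (fun x hx => (hqs q (List.mem_cons_self)).2 x hx) hkey h1
    obtain ⟨C, hCC₁, hCcard, hall⟩ :=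
      ih C₁ (fun x hx y hy => hkey x (hC₁B hx) y (hC₁B hy))
        (fun q' hq' => ⟨(hqs q' (List.mem_cons_of_mem q hq')).1,
          fun x hx => (hqs q' (List.mem_cons_of_mem q hq')).2 x (hC₁B hx)⟩)
        (by rw [hC₁card]; exact Nat.lt_succ_self _)
    refine ⟨C, hCC₁.trans hC₁B, hCcard, ?_⟩
    intro q' hq'
    rcases List.mem_cons.1 hq' with rfl | h
    · have hsub : (restr q' C).Sublist (restr q' C₁) := restr_sublist_of_subset q' hCC₁
      rcases hmono with h | h
      · exact Or.inl (h.sublist hsub)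
      · exact Or.inr (h.sublist hsub)
    · exact hall q' h

lemma inc_eq {key : ℕ → ℕ} {l₁ l₂ : List ℕ} (h₁ : l₁.Nodup) (h₂ : l₂.Nodup)
    (ht : l₁.toFinset = l₂.toFinset) (s₁ : IncK key l₁) (s₂ : IncK key l₂) : l₁ = l₂ := by
  haveI : IsAntisymm ℕ fun a b => key a < key b :=
    ⟨fun a b h h' => absurd (h.trans h') (lt_irrefl _)⟩
  exact List.Perm.eq_of_pairwise' (r := fun a b => key a < key b) s₁ s₂ (List.perm_of_nodup_nodup_toFinset_eq h₁ h₂ ht)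

lemma join_restr_sublist (ps : List (List ℕ)) (C : Finset ℕ) :
    ((ps.map (fun q => restr q C)).flatten).Sublist ps.flatten := by
  induction ps with
  | nil => simp
  | cons q ps ih => simpa using (restr_sublist q C).append ih

end Stmt0Aux

open Stmt0Aux in
theorem stmt0 (r s : ℕ) (F : List ℕ)
    (hF : IsFormation ((r - 1) ^ (2 ^ (s - 1)) + 1) s F) :
    ∃ G, IsBinaryFormation r s G ∧ G.Sublist F := by
  obtain ⟨A, ps, hA, hlen, hperm, rfl⟩ := hF
  rcases Nat.eq_zero_or_pos s with rfl | hs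
  · -- s = 0 : take the empty binary formation on a fresh alphabet of size r
    have hnil : ps = [] := List.length_eq_zero_iff.1 hlen
    subst hnil
    refine ⟨[], ⟨(List.range r).toFinset, List.range r, [], ?_,
      List.nodup_range, rfl, rfl, by simp, rfl⟩, by simp⟩
    rw [List.toFinset_card_of_nodup (List.nodup_range), List.length_range]
  rcases Nat.eq_zero_or_pos r with rfl | hr
  · -- r = 0 : take s copies of the empty permutation
    refine ⟨[], ⟨∅, [], List.replicate s [], by simp, by simp, by simp, by simp,
      fun q hq => Or.inl (List.eq_of_mem_replicate hq), ?_⟩, List.nil_sublist _⟩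
    induction s with
    | zero => rfl
    | succ n ih => simp [ih]
  -- main case : r ≥ 1, s ≥ 1
  obtain ⟨p₀, rest, rfl⟩ : ∃ p₀ rest, ps = p₀ :: rest := by
    cases ps with
    | nil => simp at hlen; omega
    | cons a l => exact ⟨a, l, rfl⟩
  have hp₀ := hperm p₀ (List.mem_cons_self)
  set key : ℕ → ℕ := fun x => List.idxOf x p₀ with hkeydef
  have hkey : ∀ x ∈ A, ∀ y ∈ A, key x = key y → x = y := by
    intro x hx y hy h
    have hx' : x ∈ p₀ := by rw [← hp₀.2] at hx; exact List.mem_toFinset.1 hx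
    have hy' : y ∈ p₀ := by rw [← hp₀.2] at hy; exact List.mem_toFinset.1 hy
    exact (List.idxOf_inj hx').1 h
  have hrestlen : rest.length = s - 1 := by
    simp only [List.length_cons] at hlen; omega
  obtain ⟨C, hCA, hCcard, hrest⟩ :=
    main_lemma (r - 1) key rest A hkey
      (fun q hq => ⟨(hperm q (List.mem_cons_of_mem p₀ hq)).1,
        fun x hx => List.mem_toFinset.1 (((hperm q (List.mem_cons_of_mem p₀ hq)).2) ▸ hx)⟩)
      (by rw [hA, hrestlen]; exact Nat.lt_succ_self _)
  have hCcard' : C.card = r := by rw [hCcard]; omega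
  have hCsubq : ∀ q ∈ p₀ :: rest, ∀ x ∈ C, x ∈ q := by
    intro q hq x hx
    exact List.mem_toFinset.1 (((hperm q hq).2) ▸ hCA hx)
  -- the base permutation restricted to C
  set p : List ℕ := restr p₀ C with hpdef
  have hpnodup : p.Nodup := restr_nodup hp₀.1 C
  have hptf : p.toFinset = C := restr_toFinset (hCsubq p₀ (List.mem_cons_self))
  have hpinc : IncK key p := by
    have : p₀.Pairwise fun a b => key a < key b := nodup_pairwise_indexOf hp₀.1
    exact this.sublist (restr_sublist _ _)
  have hIncOrDec : ∀ q ∈ p₀ :: rest, IncK key (restr q C) ∨ DecK key (restr q C) := by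
    intro q hq
    rcases List.mem_cons.1 hq with rfl | h
    · exact Or.inl hpinc
    · exact hrest q h
  have hq_eq : ∀ q ∈ p₀ :: rest, restr q C = p ∨ restr q C = p.reverse := by
    intro q hq
    have hqn : (restr q C).Nodup := restr_nodup (hperm q hq).1 C
    have hqtf : (restr q C).toFinset = C := restr_toFinset (hCsubq q hq)
    rcases hIncOrDec q hq with h | h
    · exact Or.inl (inc_eq hqn hpnodup (hqtf.trans hptf.symm) h hpinc)
    · right
      have hrevinc : IncK key (restr q C).reverse := by
        rw [IncK, List.pairwise_reverse]; exact h
      have : (restr q C).reverse = p :=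
        inc_eq (List.nodup_reverse.2 hqn) hpnodup (by rw [List.toFinset_reverse, hqtf, hptf]) hrevinc hpinc
      rw [← this, List.reverse_reverse]
  refine ⟨((p₀ :: rest).map (fun q => restr q C)).flatten,
    ⟨C, p, (p₀ :: rest).map (fun q => restr q C), hCcard', hpnodup, hptf, ?_, ?_, rfl⟩,
    join_restr_sublist _ _⟩
  · rw [List.length_map]; exact hlen
  · intro q' hq'
    obtain ⟨q, hq, rfl⟩ := List.mem_map.1 hq'
    exact hq_eq q hq
end

section
/- If u is a sequence with r distinct letters, then fl(u) ≤ (r-1)^(2^(fw(u)-1)) + 1, where fl(u) is the formation length of u. -/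
/-! ### Auxiliary machinery -/

open List Finset Function

namespace FWaux

/-- relative rank order induced by the list `p`. -/
def rk (p : List ℕ) (a b : ℕ) : Prop := p.idxOf a < p.idxOf b

lemma self_pairwise (p : List ℕ) (hp : p.Nodup) : p.Pairwise (rk p) := by
  rw [List.pairwise_iff_getElem]
  intro i j hi hj hij
  unfold rk
  rw [List.Nodup.idxOf_getElem hp i hi, List.Nodup.idxOf_getElem hp j hj]
  exact hij

instance (p : List ℕ) : IsAntisymm ℕ (rk p) :=
  ⟨fun _ _ h1 h2 => absurd h1 (not_lt.2 (le_of_lt h2))⟩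

lemma lemE {p t : List ℕ} (hp : p.Nodup) (ht : t.Nodup) (hsub : ∀ x ∈ t, x ∈ p)
    (hsort : t.Pairwise (rk p)) : p.filter (· ∈ t.toFinset) = t := by
  have hperm : (p.filter (· ∈ t.toFinset)) ~ t := by
    apply List.perm_of_nodup_nodup_toFinset_eq (hp.filter _) ht
    ext x
    simp only [List.toFinset_filter, Finset.mem_filter, List.mem_toFinset, decide_eq_true_eq]
    exact ⟨fun h => h.2, fun h => ⟨hsub x h, h⟩⟩
  exact List.Perm.eq_of_pairwise (fun _ _ _ _ h1 h2 => absurd h1 (not_lt.2 (le_of_lt h2)))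
    (List.Pairwise.sublist (List.filter_sublist (l := p)) (self_pairwise p hp)) hsort hperm

theorem erdos_szekeres {α : Type*} [LinearOrder α] {r s n : ℕ} {f : Fin n → α}
    (hn : r * s < n) (hf : Injective f) :
    (∃ t : Finset (Fin n), r < #t ∧ StrictMonoOn f ↑t) ∨
      ∃ t : Finset (Fin n), s < #t ∧ StrictAntiOn f ↑t := by
  let inc_sequences_ending_in : Fin n → Finset (Finset (Fin n)) := fun i =>
    univ.powerset.filter fun t => Finset.max t = i ∧ StrictMonoOn f ↑t
  let dec_sequences_ending_in : Fin n → Finset (Finset (Fin n)) := fun i =>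
    univ.powerset.filter fun t => Finset.max t = i ∧ StrictAntiOn f ↑t
  have inc_i : ∀ i, {i} ∈ inc_sequences_ending_in i := fun i => by
    simp [inc_sequences_ending_in, StrictMonoOn]
  have dec_i : ∀ i, {i} ∈ dec_sequences_ending_in i := fun i => by
    simp [dec_sequences_ending_in, StrictAntiOn]
  let ab' : Fin n → ℕ × ℕ := by
    intro i
    apply
      (max' ((inc_sequences_ending_in i).image card) (Nonempty.image ⟨{i}, inc_i i⟩ _),
        max' ((dec_sequences_ending_in i).image card) (Nonempty.image ⟨{i}, dec_i i⟩ _))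
  generalize hab : ab' = ab
  rsuffices ⟨i, hi⟩ : ∃ i, r < (ab i).1 ∨ s < (ab i).2
  · refine Or.imp ?_ ?_ hi
    on_goal 1 =>
      have : (ab i).1 ∈ image card (inc_sequences_ending_in i) := by
        simp only [← hab]; exact max'_mem _ (Nonempty.image ⟨{i}, inc_i i⟩ _)
    on_goal 2 =>
      have : (ab i).2 ∈ image card (dec_sequences_ending_in i) := by
        simp only [← hab]; exact max'_mem _ (Nonempty.image ⟨{i}, dec_i i⟩ _)
    all_goals
      intro hi
      rw [Finset.mem_image] at this
      obtain ⟨t, ht₁, ht₂⟩ := this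
      refine ⟨t, by rwa [ht₂], ?_⟩
      rw [Finset.mem_filter] at ht₁
      apply ht₁.2.2
  have : Injective ab := by
    simp only [← hab]
    apply Function.Injective.of_lt_imp_ne
    intro i j k q
    injection q with q₁ q₂
    cases lt_or_gt_of_ne fun _ => ne_of_lt ‹i < j› (hf ‹f i = f j›)
    on_goal 1 =>
      apply ne_of_lt _ q₁
      have : (ab' i).1 ∈ image card (inc_sequences_ending_in i) := by exact max'_mem _ (Nonempty.image ⟨{i}, inc_i i⟩ _)
    on_goal 2 =>
      apply ne_of_lt _ q₂
      have : (ab' i).2 ∈ image card (dec_sequences_ending_in i) := by exact max'_mem _ (Nonempty.image ⟨{i}, dec_i i⟩ _)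
    all_goals
      rw [Nat.lt_iff_add_one_le]
      apply le_max'
      rw [Finset.mem_image] at this ⊢
      rcases this with ⟨t, ht₁, ht₂⟩
      rw [Finset.mem_filter] at ht₁
      have : t.max = i := by simp only [ht₁.2.1]
      refine ⟨insert j t, ?_, ?_⟩
      · rw [Finset.mem_filter]
        refine ⟨?_, ?_, ?_⟩
        · rw [Finset.mem_powerset]; apply subset_univ
        · convert Finset.max_insert (a := j) (s := t)
          rw [ht₁.2.1, max_eq_left]
          apply WithBot.coe_le_coe.mpr (le_of_lt ‹i < j›)
        simp only [StrictMonoOn, StrictAntiOn, coe_insert, Set.mem_insert_iff, mem_coe]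
        rintro x ⟨rfl | _⟩ y ⟨rfl | _⟩ _
        · apply (irrefl _ ‹j < j›).elim
        · exfalso
          apply not_le_of_gt (_root_.trans ‹i < j› ‹j < y›) (le_max_of_eq ‹y ∈ t› ‹t.max = i›)
        · first
          | apply lt_of_le_of_lt _ ‹f i < f j›
          | apply lt_of_lt_of_le ‹f j < f i› _
          rcases lt_or_eq_of_le (le_max_of_eq ‹x ∈ t› ‹t.max = i›) with (_ | rfl)
          · apply le_of_lt (ht₁.2.2 ‹x ∈ t› (mem_of_max ‹t.max = i›) ‹x < i›)
          · rfl
        · apply ht₁.2.2 ‹x ∈ t› ‹y ∈ t› ‹x < y›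
      · rw [Finset.card_insert_of_notMem, ht₂]
        intro
        apply not_le_of_gt ‹i < j› (le_max_of_eq ‹j ∈ t› ‹t.max = i›)
  by_contra! q
  let ran : Finset (ℕ × ℕ) := (Finset.range r).image Nat.succ ×ˢ (Finset.range s).image Nat.succ
  have : image ab univ ⊆ ran := by
    rintro ⟨x₁, x₂⟩
    simp only [ran, Finset.mem_image, exists_prop, Finset.mem_range, Finset.mem_univ, Finset.mem_product, true_and,
      Prod.ext_iff]
    rintro ⟨i, rfl, rfl⟩
    specialize q i
    have z : 1 ≤ (ab i).1 ∧ 1 ≤ (ab i).2 := by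
      simp only [← hab]
      constructor <;>
        · apply le_max'
          rw [Finset.mem_image]
          exact ⟨{i}, by solve_by_elim, Finset.card_singleton i⟩
    exact ⟨⟨(ab i).1 - 1, by omega⟩, (ab i).2 - 1, by omega⟩
  apply not_le_of_gt hn
  simpa [ran, Nat.succ_injective, Finset.card_image_of_injective, ‹Injective ab›] using Finset.card_le_card this

lemma step {p q : List ℕ} (m : ℕ) (hp : p.Nodup) (hq : q.Nodup)
    (hiff : ∀ x, x ∈ q ↔ x ∈ p) (hlen : (m - 1) ^ 2 + 1 ≤ p.length) :
    ∃ t : List ℕ, t.Nodup ∧ t.length = m ∧ (∀ x ∈ t, x ∈ p) ∧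
      p.filter (· ∈ t.toFinset) = t ∧
      (q.filter (· ∈ t.toFinset) = t ∨ q.filter (· ∈ t.toFinset) = t.reverse) := by
  have hfe : q.toFinset = p.toFinset := by ext x; simpa using hiff x
  have hlq : q.length = p.length := by
    rw [← List.toFinset_card_of_nodup hq, ← List.toFinset_card_of_nodup hp, hfe]
  set f : Fin q.length → ℕ := fun i => p.idxOf q[i.1] with hf
  have hfinj : Function.Injective f := by
    intro i j hij
    have hiq : q[i.1] ∈ q := List.getElem_mem _
    have hjq : q[j.1] ∈ q := List.getElem_mem _
    have : q[i.1] = q[j.1] :=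
      (List.idxOf_inj ((hiff _).1 hiq)).1 hij
    exact hq.get_inj_iff.1 this
  have hmul : (m - 1) * (m - 1) < q.length := by
    rw [hlq]; nlinarith [hlen, sq (m - 1)]
  have build : ∀ ts : Finset (Fin q.length), ts.card = m →
      ∃ t : List ℕ, t.Nodup ∧ t.length = m ∧ (∀ x ∈ t, x ∈ q) ∧
        q.filter (· ∈ t.toFinset) = t ∧
        t = (ts.sort (· ≤ ·)).map (fun i => q[i.1]) := by
    intro ts hcard
    set idx := ts.sort (· ≤ ·) with hidx
    have hpw : idx.Pairwise (· < ·) := ts.sortedLT_sort.pairwise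
    set t := idx.map (fun i => q[i.1]) with hT
    have htq : t <+ q := by
      have := List.map_getElem_sublist (l := q) (is := idx) hpw
      simpa [hT] using this
    have htnd : t.Nodup := htq.nodup hq
    have hmem : ∀ x ∈ t, x ∈ q := fun x hx => htq.subset hx
    have hqf : q.filter (· ∈ t.toFinset) = t := by
      apply lemE hq htnd hmem
      rw [hT, List.pairwise_map]
      refine hpw.imp ?_
      intro i j hij
      unfold rk
      rw [List.Nodup.idxOf_getElem hq _ _, List.Nodup.idxOf_getElem hq _ _]
      exact hij
    exact ⟨t, htnd, by simp [hT, hidx, hcard], hmem, hqf, rfl⟩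
  rcases erdos_szekeres hmul hfinj with ⟨ts0, hc, hmono⟩ | ⟨ts0, hc, hanti⟩
  · obtain ⟨ts, hsub, hcard⟩ := Finset.exists_subset_card_eq (s := ts0) (n := m) (by omega)
    obtain ⟨t, htnd, htlen, hmem, hqf, hTdef⟩ := build ts hcard
    refine ⟨t, htnd, htlen, fun x hx => (hiff x).1 (hmem x hx), ?_, Or.inl hqf⟩
    apply lemE hp htnd (fun x hx => (hiff x).1 (hmem x hx))
    rw [hTdef, List.pairwise_map]
    refine List.Pairwise.imp_of_mem ?_ ts.sortedLT_sort.pairwise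
    intro i j hi hj hij
    exact hmono (hsub (Finset.mem_sort _ |>.1 hi)) (hsub (Finset.mem_sort _ |>.1 hj)) hij
  · obtain ⟨ts, hsub, hcard⟩ := Finset.exists_subset_card_eq (s := ts0) (n := m) (by omega)
    obtain ⟨t, htnd, htlen, hmem, hqf, hTdef⟩ := build ts hcard
    have hrevsort : t.reverse.Pairwise (rk p) := by
      rw [List.pairwise_reverse, hTdef, List.pairwise_map]
      refine List.Pairwise.imp_of_mem ?_ ts.sortedLT_sort.pairwise
      intro i j hi hj hij
      exact hanti (hsub (Finset.mem_sort _ |>.1 hi)) (hsub (Finset.mem_sort _ |>.1 hj)) hij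
    refine ⟨t.reverse, (List.nodup_reverse.2 htnd), by simp [htlen],
      fun x hx => (hiff x).1 (hmem x (List.mem_reverse.1 hx)), ?_, Or.inr ?_⟩
    · apply lemE hp (List.nodup_reverse.2 htnd)
        (fun x hx => (hiff x).1 (hmem x (List.mem_reverse.1 hx))) hrevsort
    · rw [List.reverse_reverse]
      rw [← hqf]
      apply List.filter_congr
      intro x hx
      simp [List.toFinset_reverse]
      exact fun _ => hx

lemma filter_comm_of_subset {l : List ℕ} {S T : Finset ℕ} (h : ∀ x ∈ S, x ∈ T) :
    (l.filter (· ∈ T)).filter (· ∈ S) = l.filter (· ∈ S) := by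
  rw [List.filter_filter]
  apply List.filter_congr
  intro x _
  by_cases hx : x ∈ S
  · simp [hx, h x hx]
  · simp [hx]

lemma recMain : ∀ (qs : List (List ℕ)) (p : List ℕ) (m : ℕ), p.Nodup →
    (∀ q ∈ qs, q.Nodup ∧ ∀ x ∈ p, x ∈ q) →
    ((m - 1) ^ (2 ^ qs.length) + 1 ≤ p.length) →
    ∃ t : List ℕ, t.Nodup ∧ t.length = m ∧ (∀ x ∈ t, x ∈ p) ∧
      p.filter (· ∈ t.toFinset) = t ∧
      ∀ q ∈ qs, q.filter (· ∈ t.toFinset) = t ∨ q.filter (· ∈ t.toFinset) = t.reverse := by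
  intro qs
  induction qs with
  | nil =>
    intro p m hp _ hlen
    refine ⟨p.take m, hp.sublist (List.take_sublist _ _), ?_,
      fun x hx => (List.take_sublist _ _).subset hx, ?_, by simp⟩
    · simp only [List.length_take]
      simp only [List.length_nil, pow_zero, pow_one] at hlen
      omega
    · exact lemE hp (hp.sublist (List.take_sublist _ _))
        (fun x hx => (List.take_sublist _ _).subset hx)
        (List.Pairwise.sublist (List.take_sublist _ _) (self_pairwise p hp))
  | cons q qs' ih =>
    intro p m hp hqs hlen
    obtain ⟨hqnd, hpq⟩ := hqs q (List.mem_cons_self)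
    set m₁ := (m - 1) ^ (2 ^ qs'.length) + 1 with hm₁
    set qres := q.filter (· ∈ p.toFinset) with hqres
    have hiff : ∀ x, x ∈ qres ↔ x ∈ p := by
      intro x
      simp only [hqres, List.mem_filter, List.mem_toFinset, decide_eq_true_eq]
      exact ⟨fun h => h.2, fun h => ⟨hpq x h, h⟩⟩
    have hlen1 : (m₁ - 1) ^ 2 + 1 ≤ p.length := by
      have : (m₁ - 1) ^ 2 = (m - 1) ^ (2 ^ (qs'.length + 1)) := by
        rw [hm₁]
        simp only [Nat.add_sub_cancel]
        rw [← pow_mul, ← pow_succ]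
      rw [this]
      simpa using hlen
    obtain ⟨t₁, ht₁nd, ht₁len, ht₁p, hpf, hqf⟩ := step m₁ hp (hqnd.filter _) hiff hlen1
    obtain ⟨t, htnd, htlen, htt₁, ht₁f, hrest⟩ := ih t₁ m ht₁nd
      (fun q' hq' => ⟨(hqs q' (List.mem_cons_of_mem _ hq')).1,
        fun x hx => (hqs q' (List.mem_cons_of_mem _ hq')).2 x (ht₁p x hx)⟩)
      (by rw [ht₁len])
    have htsub1 : ∀ x ∈ t.toFinset, x ∈ t₁.toFinset := by
      intro x hx
      simp only [List.mem_toFinset] at *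
      exact htt₁ x hx
    have htsubp : ∀ x ∈ t.toFinset, x ∈ p.toFinset := by
      intro x hx
      simp only [List.mem_toFinset] at *
      exact ht₁p x (htt₁ x hx)
    refine ⟨t, htnd, htlen, fun x hx => ht₁p x (htt₁ x hx), ?_, ?_⟩
    · rw [← filter_comm_of_subset htsub1, hpf, ht₁f]
    · intro q' hq'
      rcases List.mem_cons.1 hq' with rfl | hq'
      · have h1 : q'.filter (· ∈ t.toFinset) = qres.filter (· ∈ t.toFinset) := by
          rw [hqres, filter_comm_of_subset htsubp]
        rw [h1, ← filter_comm_of_subset htsub1]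
        rcases hqf with h | h
        · rw [h, ht₁f]; exact Or.inl rfl
        · rw [h, List.filter_reverse, ht₁f]; exact Or.inr rfl
      · exact hrest q' hq'

lemma contains_of_sublist {B F u : List ℕ} (hBF : B <+ F) (h : Contains B u) : Contains F u := by
  obtain ⟨f, hf, hsub⟩ := h
  exact ⟨f, hf, hsub.trans hBF⟩

lemma filter_join' (L : List (List ℕ)) (P : ℕ → Bool) :
    L.flatten.filter P = (L.map (List.filter P)).flatten := by
  induction L with
  | nil => simp
  | cons a L ih => simp [List.filter_append, ih]

lemma map_join' (L : List (List ℕ)) (g : ℕ → ℕ) :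
    L.flatten.map g = (L.map (List.map g)).flatten := by
  induction L with
  | nil => simp
  | cons a L ih => simp [ih]

lemma sublist_join (v : List ℕ) : ∀ ps : List (List ℕ), v.length ≤ ps.length →
    (∀ y ∈ v, ∀ q ∈ ps, y ∈ q) → v <+ ps.flatten := by
  induction v with
  | nil => intro ps _ _; exact List.nil_sublist _
  | cons y v ih =>
    intro ps hlen hmem
    match ps with
    | q :: ps' =>
      have h1 : [y] <+ q :=
        List.singleton_sublist.2 (hmem y (List.mem_cons_self) q (List.mem_cons_self))
      have h2 : v <+ ps'.flatten := ih ps' (by simpa using hlen)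
        (fun z hz q' hq' => hmem z (List.mem_cons_of_mem _ hz) q' (List.mem_cons_of_mem _ hq'))
      simpa using List.Sublist.append h1 h2

lemma relabel {w t : List ℕ} (hw : w.Nodup) (ht : t.Nodup) (hlen : w.length = t.length) :
    ∃ g : ℕ → ℕ, Function.Injective g ∧ w.map g = t := by
  classical
  set M := (t.toFinset.sup id) + 1 with hM
  have hbound : ∀ y ∈ t, y < M := by
    intro y hy
    have := Finset.le_sup (f := id) (List.mem_toFinset.2 hy)
    simp only [id] at this
    omega
  have hidx : ∀ x, x ∈ w → w.idxOf x < t.length := by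
    intro x hx; rw [← hlen]; exact List.idxOf_lt_length_iff.2 hx
  set g : ℕ → ℕ := fun x => if h : x ∈ w then t[w.idxOf x]'(hidx x h) else x + M with hg
  have hginj : Function.Injective g := by
    intro x y hxy
    simp only [hg] at hxy
    by_cases hx : x ∈ w <;> by_cases hy : y ∈ w
    · rw [dif_pos hx, dif_pos hy] at hxy
      have : w.idxOf x = w.idxOf y := by
        by_contra hne
        exact hne (List.Nodup.getElem_inj_iff ht |>.1 hxy)
      exact (List.idxOf_inj hx).1 this
    · rw [dif_pos hx, dif_neg hy] at hxy
      have := hbound _ (List.getElem_mem (hidx x hx))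
      omega
    · rw [dif_neg hx, dif_pos hy] at hxy
      have := hbound _ (List.getElem_mem (hidx y hy))
      omega
    · rw [dif_neg hx, dif_neg hy] at hxy; omega
  refine ⟨g, hginj, ?_⟩
  apply List.ext_getElem (by simpa using hlen)
  intro i hi hi'
  simp only [List.getElem_map]
  have hmem : w[i] ∈ w := List.getElem_mem (by simpa using hi)
  simp only [hg, dif_pos hmem]
  congr 1
  rw [List.Nodup.idxOf_getElem hw]

/-- monotonicity of the formation property in `r`. -/
lemma formation_mono {u : List ℕ} {s r₀ R : ℕ} (hr : r₀ ≤ R)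
    (h : ∀ F, IsFormation r₀ s F → Contains F u) :
    ∀ F, IsFormation R s F → Contains F u := by
  classical
  rintro F ⟨A, ps, hA, hps, hblocks, rfl⟩
  obtain ⟨A', hA'sub, hA'card⟩ := Finset.exists_subset_card_eq (s := A) (n := r₀) (by omega)
  have hform : IsFormation r₀ s (ps.flatten.filter (· ∈ A')) := by
    refine ⟨A', ps.map (List.filter (· ∈ A')), hA'card, by simpa using hps, ?_,
      filter_join' ps _⟩
    intro p hp
    obtain ⟨p₀, hp₀, rfl⟩ := List.mem_map.1 hp
    obtain ⟨hnd, hfin⟩ := hblocks p₀ hp₀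
    constructor
    · exact hnd.filter _
    · ext x
      simp only [List.toFinset_filter, Finset.mem_filter, List.mem_toFinset,
        decide_eq_true_eq, hfin]
      exact ⟨fun h => h.2, fun h => ⟨hA'sub h, h⟩⟩
  exact contains_of_sublist List.filter_sublist (h _ hform)

/-- The set defining `fw` is nonempty: `s = |u|` works with `r = ` number of letters. -/
lemma fw_set_nonempty (u : List ℕ) :
    ∃ s, ∃ r, ∀ F, IsFormation r s F → Contains F u := by
  classical
  refine ⟨u.length, u.toFinset.card, ?_⟩
  rintro F ⟨A, ps, hA, hps, hblocks, rfl⟩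
  set w := u.toFinset.sort (· ≤ ·) with hw
  set t := A.sort (· ≤ ·) with ht
  obtain ⟨g, hg, hmapg⟩ := relabel (w := w) (t := t) (Finset.sort_nodup _ _) (Finset.sort_nodup _ _)
    (by rw [hw, ht, Finset.length_sort, Finset.length_sort, hA])
  refine ⟨g, hg, ?_⟩
  apply sublist_join
  · simpa [hps] using le_refl u.length
  · intro y hy q hq
    obtain ⟨x, hx, rfl⟩ := List.mem_map.1 hy
    have hxw : x ∈ w := by simp [hw, List.mem_toFinset.2 hx]
    have : g x ∈ t := by rw [← hmapg]; exact List.mem_map_of_mem (f := g) hxw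
    have hgA : g x ∈ A := (Finset.mem_sort _).1 this
    have := (hblocks q hq).2
    rw [← this] at hgA
    exact List.mem_toFinset.1 hgA

lemma contains_nil (F : List ℕ) : Contains F [] :=
  ⟨id, Function.injective_id, by simp⟩

end FWaux

open FWaux in
theorem stmt6 (u : List ℕ) (r : ℕ) (h : u.toFinset.card = r) :
    fl u ≤ (r - 1) ^ (2 ^ (fw u - 1)) + 1 := by
  classical
  set s := fw u with hs
  set N := (r - 1) ^ (2 ^ (s - 1)) + 1 with hN
  apply Nat.sInf_le
  show ∀ F, IsFormation N s F → Contains F u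
  by_cases hu : u = []
  · intro F _; rw [hu]; exact contains_nil F
  -- u is nonempty
  have hSne : {s' | ∃ r', ∀ F, IsFormation r' s' F → Contains F u}.Nonempty := by
    obtain ⟨s', r', hs'⟩ := fw_set_nonempty u
    exact ⟨s', r', hs'⟩
  have hfw_mem : ∃ r₀, ∀ F, IsFormation r₀ s F → Contains F u := Nat.sInf_mem hSne
  obtain ⟨r₀, hall⟩ := hfw_mem
  have hr_le : r ≤ max r₀ r := le_max_right _ _
  set R := max r₀ r with hR
  have hall' : ∀ F, IsFormation R s F → Contains F u :=
    formation_mono (le_max_left _ _) hall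
  have hs1 : 1 ≤ s := by
    by_contra hcon
    push_neg at hcon
    interval_cases s
    · -- fw u = 0 : the empty formation must contain u, so u = []
      have hform : IsFormation r₀ 0 ([] : List ℕ) := by
        obtain ⟨B, hB⟩ := Finset.exists_subset_card_eq (s := Finset.range r₀) (n := r₀) (by simp)
        exact ⟨B, [], hB.2, rfl, by simp, rfl⟩
      obtain ⟨f, _, hsub⟩ := hall [] hform
      rw [List.sublist_nil] at hsub
      exact hu (by simpa using congrArg List.length hsub)
  rintro F ⟨A, ps, hA, hps, hblocks, rfl⟩
  match ps, hps with
  | [], hps =>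
    exact absurd hs1 (by simp only [List.length_nil] at hps; omega)
  | p₁ :: rest, hps =>
  have hp₁ := hblocks p₁ (List.mem_cons_self)
  have hp₁len : p₁.length = N := by
    rw [← List.toFinset_card_of_nodup hp₁.1, hp₁.2, hA]
  have hrest_len : rest.length = s - 1 := by
    simp only [List.length_cons] at hps; omega
  obtain ⟨t, htnd, htlen, htp₁, hp₁f, hrestf⟩ := recMain rest p₁ r hp₁.1
    (fun q hq => ⟨(hblocks q (List.mem_cons_of_mem _ hq)).1,
      fun x hx => by
        have h1 : x ∈ p₁.toFinset := List.mem_toFinset.2 hx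
        rw [hp₁.2, ← (hblocks q (List.mem_cons_of_mem _ hq)).2] at h1
        exact List.mem_toFinset.1 h1⟩)
    (by rw [hp₁len, hrest_len, hN])
  -- all blocks filter to t or t.reverse
  have hfilt : ∀ q ∈ p₁ :: rest,
      q.filter (· ∈ t.toFinset) = t ∨ q.filter (· ∈ t.toFinset) = t.reverse := by
    intro q hq
    rcases List.mem_cons.1 hq with rfl | hq
    · exact Or.inl hp₁f
    · exact hrestf q hq
  -- build the big binary formation B'
  set M := (t.toFinset.sup id) + 1 with hM
  have htM : ∀ y ∈ t, y < M := by
    intro y hy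
    have := Finset.le_sup (f := id) (List.mem_toFinset.2 hy)
    simp only [id] at this
    omega
  set p' := t ++ List.range' M (R - r) with hp'
  have hp'nd : p'.Nodup := by
    rw [hp', List.nodup_append]
    refine ⟨htnd, List.nodup_range', ?_⟩
    intro a ha b hb
    obtain ⟨i, hi, rfl⟩ := List.mem_range'.1 hb
    have h1 := htM _ ha
    omega
  have hp'len : p'.length = R := by
    simp [hp', htlen]
    omega
  set B' := ((p₁ :: rest).map
    (fun q => if q.filter (· ∈ t.toFinset) = t then p' else p'.reverse)).flatten with hB'
  have hform' : IsFormation R s B' := by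
    refine ⟨p'.toFinset, _, ?_, by simpa using hps, ?_, rfl⟩
    · rw [List.toFinset_card_of_nodup hp'nd, hp'len]
    · intro q hq
      obtain ⟨q₀, _, rfl⟩ := List.mem_map.1 hq
      by_cases hc : q₀.filter (· ∈ t.toFinset) = t
      · rw [if_pos hc]; exact ⟨hp'nd, rfl⟩
      · rw [if_neg hc]
        exact ⟨List.nodup_reverse.2 hp'nd, List.toFinset_reverse⟩
  obtain ⟨f, hfinj, hfsub⟩ := hall' B' hform'
  -- the letters used by the embedding
  set L := (u.map f).toFinset with hL
  have hLeq : L = u.toFinset.image f := by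
    ext x
    simp [hL, List.mem_map]
  have hLcard : L.card = r := by
    rw [hLeq, Finset.card_image_of_injective _ hfinj, h]
  have hLp' : ∀ x ∈ L, x ∈ p' := by
    intro x hx
    have hxB : x ∈ B' := hfsub.subset (List.mem_toFinset.1 hx)
    rw [hB'] at hxB
    rw [List.mem_flatten] at hxB
    obtain ⟨l, hl, hxl⟩ := hxB
    obtain ⟨q₀, _, rfl⟩ := List.mem_map.1 hl
    by_cases hc : q₀.filter (· ∈ t.toFinset) = t
    · rw [if_pos hc] at hxl; exact hxl
    · rw [if_neg hc, List.mem_reverse] at hxl; exact hxl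
  set w := p'.filter (· ∈ L) with hwdef
  have hwnd : w.Nodup := hp'nd.filter _
  have hwfin : w.toFinset = L := by
    ext x
    simp only [hwdef, List.toFinset_filter, Finset.mem_filter, List.mem_toFinset,
      decide_eq_true_eq]
    exact ⟨fun hh => hh.2, fun hh => ⟨hLp' x hh, hh⟩⟩
  have hwlen : w.length = t.length := by
    rw [← List.toFinset_card_of_nodup hwnd, hwfin, hLcard, htlen]
  obtain ⟨g, hginj, hmapg⟩ := relabel hwnd htnd hwlen
  -- the key equality
  have hkey : (B'.filter (· ∈ L)).map g = (p₁ :: rest).flatten.filter (· ∈ t.toFinset) := by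
    rw [hB', filter_join', map_join', filter_join', List.map_map, List.map_map]
    congr 1
    apply List.map_congr_left
    intro q hq
    simp only [Function.comp_apply]
    by_cases hc : q.filter (· ∈ t.toFinset) = t
    · rw [if_pos hc, hc, ← hwdef, hmapg]
    · have : q.filter (· ∈ t.toFinset) = t.reverse := (hfilt q hq).resolve_left hc
      rw [if_neg hc, this, List.filter_reverse, ← hwdef, List.map_reverse, hmapg]
  -- conclude
  refine ⟨g ∘ f, hginj.comp hfinj, ?_⟩
  have h1 : (u.map f).filter (· ∈ L) = u.map f := by
    apply List.filter_eq_self.2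
    intro x hx
    simp only [hL, List.mem_toFinset, decide_eq_true_eq]
    exact hx
  have h2 : u.map (g ∘ f) <+ (B'.filter (· ∈ L)).map g := by
    rw [← List.map_map]
    apply List.Sublist.map
    rw [← h1]
    exact hfsub.filter _
  rw [hkey] at h2
  exact h2.trans List.filter_sublist
end

section
/- For every c ≥ 1, l(I_c D_c) = c + 1; that is, the minimum k such that up(c,k) = I_c^k contains I_c D_c as a subsequence under some injective renaming of letters (equivalently, the minimum over permutations π of the least k with I_π D_π a subsequence of I_c^k) equals c + 1. -/
/-- number of adjacent non-ascents -/
def dsc : List ℕ → ℕ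
  | [] => 0
  | [_] => 0
  | a :: b :: t => (if b ≤ a then 1 else 0) + dsc (b :: t)

lemma dsc_cons_cons (a b : ℕ) (t : List ℕ) :
    dsc (a :: b :: t) = (if b ≤ a then 1 else 0) + dsc (b :: t) := rfl

lemma dsc_single (a : ℕ) : dsc [a] = 0 := rfl

lemma dsc_append_le : ∀ x y : List ℕ, dsc (x ++ y) ≤ dsc x + dsc y + 1
  | [], y => by simp [dsc]
  | [a], y => by
      cases y with
      | nil => simp [dsc]
      | cons b t =>
          rw [List.singleton_append, dsc_cons_cons, dsc_single]
          split <;> omega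
  | a :: b :: t, y => by
      have IH := dsc_append_le (b :: t) y
      rw [List.cons_append] at IH
      show dsc (a :: b :: (t ++ y)) ≤ dsc (a :: b :: t) + dsc y + 1
      rw [dsc_cons_cons, dsc_cons_cons]
      omega

lemma dsc_append_eq : ∀ (x : List ℕ) (a : ℕ) (y : List ℕ),
    dsc (x ++ a :: y) = dsc (x ++ [a]) + dsc (a :: y)
  | [], a, y => by simp [dsc_single]
  | [b], a, y => by
      show dsc (b :: a :: y) = dsc [b, a] + dsc (a :: y)
      rw [dsc_cons_cons, dsc_cons_cons b a, dsc_single]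
      omega
  | b :: e :: t, a, y => by
      have IH := dsc_append_eq (e :: t) a y
      rw [List.cons_append, List.cons_append] at IH
      show dsc (b :: e :: (t ++ a :: y)) = dsc (b :: e :: (t ++ [a])) + dsc (a :: y)
      rw [dsc_cons_cons, dsc_cons_cons]
      omega

lemma dsc_zero_of_pairwise : ∀ {w : List ℕ}, w.Pairwise (· < ·) → dsc w = 0
  | [], _ => rfl
  | [_], _ => rfl
  | a :: b :: t, h => by
      have h1 : a < b := (List.pairwise_cons.1 h).1 b (by simp)
      have h2 := dsc_zero_of_pairwise (List.pairwise_cons.1 h).2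
      rw [dsc_cons_cons, if_neg (by omega : ¬ b ≤ a), h2]

lemma dsc_add_reverse : ∀ (b : List ℕ), b.Nodup → dsc b + dsc b.reverse = b.length - 1
  | [], _ => rfl
  | [_], _ => rfl
  | a :: h :: t, hn => by
      have hah : a ≠ h := (List.pairwise_cons.1 hn).1 h (by simp)
      have hn' : (h :: t).Nodup := (List.pairwise_cons.1 hn).2
      have IH := dsc_add_reverse (h :: t) hn'
      have e2 : (a :: h :: t).reverse = t.reverse ++ (h :: [a]) := by simp
      have e4 : dsc ((a :: h :: t).reverse)
          = dsc (t.reverse ++ [h]) + dsc [h, a] := by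
        rw [e2]; exact dsc_append_eq t.reverse h [a]
      have e3 : (h :: t).reverse = t.reverse ++ [h] := by simp
      rw [dsc_cons_cons, e4, ← e3]
      have e5 : dsc [h, a] = if a ≤ h then 1 else 0 := by
        rw [dsc_cons_cons, dsc_single]; omega
      rw [e5]
      have hx : ¬ (h ≤ a ∧ a ≤ h) := fun ⟨p, q⟩ => hah (le_antisymm q p)
      have hy : h ≤ a ∨ a ≤ h := le_total h a
      simp only [List.length_cons] at *
      split_ifs at * <;> omega

lemma dsc_palin (b : List ℕ) (hn : b.Nodup) (hne : b ≠ []) :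
    dsc (b ++ b.reverse) = b.length := by
  obtain ⟨m, t, hmt⟩ := List.exists_cons_of_ne_nil (by simpa using hne : b.reverse ≠ [])
  have hb : b = t.reverse ++ [m] := by
    have := congrArg List.reverse hmt; simpa using this
  have key : dsc (b ++ b.reverse) = dsc (b ++ [m]) + dsc (m :: t) := by
    rw [hmt]; exact dsc_append_eq b m t
  have e1 : dsc (b ++ [m]) = dsc b + 1 := by
    conv_lhs => rw [hb]
    rw [List.append_assoc, List.singleton_append, dsc_append_eq t.reverse m [m], ← hb]
    have hmm : dsc [m, m] = 1 := by rw [dsc_cons_cons, dsc_single]; simp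
    rw [hmm]
  have e3 : dsc (m :: t) = dsc b.reverse := by rw [hmt]
  have hrev := dsc_add_reverse b hn
  have hl : 1 ≤ b.length := List.length_pos_iff.2 hne
  omega

lemma sublist_rep {l : List ℕ} : ∀ (k : ℕ) (w : List ℕ), w.Sublist (rep l k) →
    ∃ ws : List (List ℕ), ws.length = k ∧ (∀ x ∈ ws, x.Sublist l) ∧ w = ws.flatten
  | 0, w, h => by
    refine ⟨[], rfl, by simp, ?_⟩
    simpa [rep] using List.sublist_nil.1 (by simpa [rep] using h)
  | k + 1, w, h => by
    have hr : rep l (k + 1) = l ++ rep l k := by simp [rep, List.replicate_succ]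
    rw [hr, List.sublist_append_iff] at h
    obtain ⟨w1, w2, rfl, h1, h2⟩ := h
    obtain ⟨ws, hlen, hmem, hj⟩ := sublist_rep k w2 h2
    refine ⟨w1 :: ws, by simp [hlen], ?_, by simp [hj]⟩
    intro x hx
    rcases List.mem_cons.1 hx with rfl | hx
    · exact h1
    · exact hmem x hx

lemma dsc_join_le : ∀ ws : List (List ℕ), (∀ x ∈ ws, dsc x = 0) →
    dsc ws.flatten ≤ ws.length - 1
  | [], _ => by simp [dsc]
  | x :: t, h => by
    have hx : dsc x = 0 := h x (by simp)
    have IH := dsc_join_le t (fun y hy => h y (List.mem_cons_of_mem _ hy))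
    have hle := dsc_append_le x t.flatten
    cases t with
    | nil => simpa [dsc, hx] using hle
    | cons a s =>
      simp only [List.flatten_cons, List.length_cons] at *
      omega

lemma sublist_rep_of_mem {l : List ℕ} : ∀ w : List ℕ, (∀ a ∈ w, a ∈ l) →
    w.Sublist (rep l w.length)
  | [], _ => by simp [rep]
  | a :: t, h => by
    have hr : rep l (t.length + 1) = l ++ rep l t.length := by
      simp [rep, List.replicate_succ]
    have h1 : [a].Sublist l := List.singleton_sublist.2 (h a (by simp))
    have h2 := sublist_rep_of_mem t (fun b hb => h b (List.mem_cons_of_mem _ hb))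
    simpa [hr] using List.Sublist.append h1 h2

lemma Ic_pairwise (c : ℕ) : (Ic c).Pairwise (· < ·) := by
  simpa [Ic] using List.pairwise_lt_range' (s := 1) (n := c)

theorem stmt11 (c : ℕ) (hc : 1 ≤ c) : lval c (Ic c ++ Dc c) = c + 1 := by
  have hIlen : (Ic c).length = c := by simp [Ic]
  have hmem : c + 1 ∈ {k | Contains (upSeq c k) (Ic c ++ Dc c)} := by
    refine ⟨id, fun a b h => h, ?_⟩
    rw [List.map_id]
    have hD : (Dc c).Sublist (rep (Ic c) c) := by
      have := sublist_rep_of_mem (l := Ic c) (Dc c) (fun a ha => by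
        simpa [Dc] using ha)
      simpa [Dc, hIlen] using this
    have : (Ic c ++ Dc c).Sublist (Ic c ++ rep (Ic c) c) :=
      List.Sublist.append (List.Sublist.refl _) hD
    simpa [upSeq, rep, List.replicate_succ] using this
  have hlb : ∀ k ∈ {k | Contains (upSeq c k) (Ic c ++ Dc c)}, c + 1 ≤ k := by
    rintro k ⟨f, hf, hsub⟩
    set b := (Ic c).map f with hb
    have hmapped : (Ic c ++ Dc c).map f = b ++ b.reverse := by
      simp [Dc, hb]
    rw [hmapped] at hsub
    obtain ⟨ws, hlen, hws, hj⟩ := sublist_rep k _ hsub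
    have hd0 : ∀ x ∈ ws, dsc x = 0 := fun x hx =>
      dsc_zero_of_pairwise ((Ic_pairwise c).sublist (hws x hx))
    have hle := dsc_join_le ws hd0
    rw [← hj] at hle
    have hnodup : b.Nodup := List.Nodup.map hf (Ic_pairwise c).nodup
    have hbne : b ≠ [] := by
      simp [hb, Ic]; omega
    have hp := dsc_palin b hnodup hbne
    have hblen : b.length = c := by simp [hb, hIlen]
    omega
  refine le_antisymm (Nat.sInf_le hmem) (le_csInf ⟨_, hmem⟩ hlb)
end

section
/- For every c ≥ 1, fw(I_c D_c) = c + 1. -/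
section Aux

/-- Number of weak descents (adjacent non-increases) in a list. -/
def desc : List ℕ → ℕ
  | a :: b :: t => (if b ≤ a then 1 else 0) + desc (b :: t)
  | _ => 0

lemma desc_nil : desc [] = 0 := rfl
lemma desc_single (a : ℕ) : desc [a] = 0 := rfl
lemma desc_cons_cons (a b : ℕ) (t : List ℕ) :
    desc (a :: b :: t) = (if b ≤ a then 1 else 0) + desc (b :: t) := rfl

lemma desc_eq_zero : ∀ (l : List ℕ), l.Pairwise (· < ·) → desc l = 0
  | [], _ => rfl
  | [_], _ => rfl
  | a :: b :: t, h => by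
    rw [desc_cons_cons]
    have hab : a < b := (List.pairwise_cons.mp h).1 b (by simp)
    rw [if_neg (by omega), desc_eq_zero (b :: t) (List.pairwise_cons.mp h).2]

lemma desc_append_le : ∀ (A B : List ℕ), desc (A ++ B) ≤ desc A + desc B + 1
  | [], B => by simp [desc_nil]
  | [a], B => by
    cases B with
    | nil => simp [desc_single]
    | cons b t =>
      simp only [List.singleton_append, desc_cons_cons, desc_single]
      split <;> omega
  | a :: b :: t, B => by
    have ih := desc_append_le (b :: t) B
    simp only [List.cons_append, desc_cons_cons] at *
    omega

lemma desc_append_cons : ∀ (X : List ℕ) (b c : ℕ) (Y : List ℕ),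
    desc ((X ++ [b]) ++ c :: Y) = desc (X ++ [b]) + (if c ≤ b then 1 else 0) + desc (c :: Y)
  | [], b, c, Y => by
    simp only [List.nil_append, List.singleton_append, desc_cons_cons, desc_single]
    omega
  | [x], b, c, Y => by
    simp only [List.singleton_append, List.cons_append, List.nil_append,
      desc_cons_cons, desc_single]
    omega
  | x :: y :: X', b, c, Y => by
    have ih := desc_append_cons (y :: X') b c Y
    simp only [List.cons_append, desc_cons_cons] at *
    omega

lemma length_le_desc : ∀ (L : List ℕ), L.Nodup → L.length ≤ desc L + desc L.reverse + 1
  | [], _ => by simp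
  | [a], _ => by simp [desc_single]
  | a :: h :: t', hnd => by
    have ih := length_le_desc (h :: t') (List.nodup_cons.mp hnd).2
    have hne : a ≠ h := by
      have := (List.nodup_cons.mp hnd).1
      simp at this; tauto
    have h1 : desc (a :: h :: t') = (if h ≤ a then 1 else 0) + desc (h :: t') :=
      desc_cons_cons a h t'
    have h2 : desc ((a :: h :: t').reverse)
        = desc ((h :: t').reverse) + (if a ≤ h then 1 else 0) := by
      have : (a :: h :: t').reverse = (t'.reverse ++ [h]) ++ a :: [] := by simp
      rw [this, desc_append_cons t'.reverse h a [], desc_single]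
      have h3 : (h :: t').reverse = t'.reverse ++ [h] := by simp
      rw [h3, Nat.add_zero]
    have hite : (if h ≤ a then 1 else 0) + (if a ≤ h then 1 else 0) ≥ 1 := by
      split <;> split <;> omega
    simp only [List.length_cons] at *
    omega

lemma desc_of_sublist_upSeq (r : ℕ) :
    ∀ (s : ℕ) (l : List ℕ), l.Sublist (upSeq r s) → l ≠ [] → desc l + 1 ≤ s
  | 0, l, hsub, hne => by
    exfalso
    apply hne
    simpa [upSeq, rep] using List.sublist_nil.mp (by simpa [upSeq, rep] using hsub)
  | s + 1, l, hsub, hne => by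
    have hsplit : upSeq r (s + 1) = Ic r ++ upSeq r s := by
      simp only [upSeq, rep, List.replicate_succ, List.flatten_cons]
    rw [hsplit] at hsub
    obtain ⟨l₁, l₂, hl, h₁, h₂⟩ := List.sublist_append_iff.mp hsub
    have hd₁ : desc l₁ = 0 :=
      desc_eq_zero l₁ (List.Pairwise.sublist h₁ (by simpa [Ic] using List.pairwise_lt_range' (s := 1) (n := r)))
    by_cases hl₂ : l₂ = []
    · subst hl₂
      simp only [List.append_nil] at hl
      subst hl
      omega
    · have ih := desc_of_sublist_upSeq r s l₂ h₂ hl₂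
      have := desc_append_le l₁ l₂
      subst hl
      omega

lemma sublist_join_of_mem : ∀ (ps : List (List ℕ)) (xs : List ℕ), xs.length = ps.length →
    (∀ p ∈ ps, ∀ x ∈ xs, x ∈ p) → xs.Sublist ps.flatten
  | [], xs, hlen, _ => by
    simp only [List.length_nil, List.length_eq_zero_iff] at hlen
    simp [hlen]
  | p :: ps', xs, hlen, hmem => by
    cases xs with
    | nil => exact List.nil_sublist _
    | cons x xs' =>
      have hx : x ∈ p := hmem p (by simp) x (by simp)
      have ih : xs'.Sublist ps'.flatten := by
        apply sublist_join_of_mem ps' xs' (by simpa using hlen)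
        intro q hq y hy
        exact hmem q (by simp [hq]) y (by simp [hy])
      have : ([x] ++ xs').Sublist (p ++ ps'.flatten) :=
        (List.singleton_sublist.mpr hx).append ih
      simpa using this

lemma upSeq_isFormation (r s : ℕ) : IsFormation r s (upSeq r s) := by
  refine ⟨(Ic r).toFinset, List.replicate s (Ic r), ?_, by simp, ?_, rfl⟩
  · rw [List.toFinset_card_of_nodup (by exact List.nodup_range' (s := 1) (n := r))]
    simp [Ic]
  · intro p hp
    rw [List.eq_of_mem_replicate hp]
    exact ⟨List.nodup_range' (s := 1) (n := r), rfl⟩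

lemma formation_contains (c : ℕ) (hc : 1 ≤ c) (F : List ℕ) (hF : IsFormation c (c + 1) F) :
    Contains F (Ic c ++ Dc c) := by
  classical
  obtain ⟨A, ps, hA, hlen, hps, hjoin⟩ := hF
  have hne : ps ≠ [] := by
    intro h; rw [h] at hlen; simp at hlen
  set q : List ℕ := ps.getLast hne with hqdef
  obtain ⟨hqnd, hqA⟩ := hps q (List.getLast_mem hne)
  have hqlen : q.length = c := by
    rw [← List.toFinset_card_of_nodup hqnd, hqA, hA]
  set f : ℕ → ℕ := fun j =>
    if h : 1 ≤ j ∧ j ≤ c then q.get ⟨c - j, by omega⟩ else q.sum + 1 + j with hfdef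
  have hfin : ∀ j (h : 1 ≤ j ∧ j ≤ c), f j = q.get ⟨c - j, by omega⟩ := by
    intro j h; simp only [hfdef, dif_pos h]
  have hfmem : ∀ j, 1 ≤ j → j ≤ c → f j ∈ q := by
    intro j h1 h2
    rw [hfin j ⟨h1, h2⟩]
    exact q.get_mem _
  have hle : ∀ x ∈ q, x ≤ q.sum := fun x hx => List.single_le_sum (by simp) x hx
  have hfinj : Function.Injective f := by
    intro j j' hjj'
    by_cases h1 : 1 ≤ j ∧ j ≤ c <;> by_cases h2 : 1 ≤ j' ∧ j' ≤ c
    · rw [hfin j h1, hfin j' h2] at hjj'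
      have := List.nodup_iff_injective_get.mp hqnd hjj'
      have := Fin.mk.injEq _ _ _ _ ▸ this
      omega
    · exfalso
      rw [hfin j h1] at hjj'
      simp only [hfdef, dif_neg h2] at hjj'
      have := hle _ (hfin j h1 ▸ hfmem j h1.1 h1.2)
      omega
    · exfalso
      rw [hfin j' h2] at hjj'
      simp only [hfdef, dif_neg h1] at hjj'
      have := hle _ (hfin j' h2 ▸ hfmem j' h2.1 h2.2)
      omega
    · simp only [hfdef, dif_neg h1, dif_neg h2] at hjj'
      omega
  refine ⟨f, hfinj, ?_⟩
  have hps' : ps = ps.dropLast ++ [q] := (List.dropLast_append_getLast hne).symm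
  have hlen' : ps.dropLast.length = c := by
    simp [List.length_dropLast, hlen]
  -- map f (Dc c) = q
  have hDc : (Dc c).map f = q := by
    apply List.ext_get
    · simp [Dc, Ic, hqlen]
    · intro n h1 h2
      have hn : n < c := by simpa [Dc, Ic] using h1
      simp only [List.get_eq_getElem, List.getElem_map]
      have hidx : n < (Dc c).length := by simpa using h1
      have hDn : (Dc c)[n]'hidx = c - n := by
        simp only [Dc, List.getElem_reverse, Ic]
        rw [List.getElem_range']
        simp [List.length_range']
        omega
      rw [hDn, hfin (c - n) ⟨by omega, by omega⟩]
      simp only [List.get_eq_getElem]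
      simp only [show c - (c - n) = n from by omega]
  -- map f (Ic c) <+ (ps.dropLast).flatten
  have hIc : ((Ic c).map f).Sublist ps.dropLast.flatten := by
    apply sublist_join_of_mem
    · simp [Ic, hlen']
    · intro p hp x hx
      obtain ⟨j, hj, rfl⟩ := List.mem_map.mp hx
      have hj' : 1 ≤ j ∧ j < 1 + c := List.mem_range'_1.mp (by simpa [Ic] using hj)
      have hxq : f j ∈ q := hfmem j hj'.1 (by omega)
      have hxA : f j ∈ A := by rw [← hqA]; exact List.mem_toFinset.mpr hxq
      have hpps : p ∈ ps := (List.dropLast_sublist ps).mem hp  -- membership via sublist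
      obtain ⟨-, hpA⟩ := hps p hpps
      rw [← List.mem_toFinset, hpA]
      exact hxA
  have hFj : F = ps.dropLast.flatten ++ q := by
    rw [hjoin]
    conv_lhs => rw [hps']
    simp
  rw [hFj, List.map_append, hDc]
  exact hIc.append (List.Sublist.refl q)

end Aux

theorem stmt12 (c : ℕ) (hc : 1 ≤ c) : fw (Ic c ++ Dc c) = c + 1 := by
  have hmem : (c + 1) ∈ {s | ∃ r, ∀ F, IsFormation r s F → Contains F (Ic c ++ Dc c)} :=
    ⟨c, fun F hF => formation_contains c hc F hF⟩
  refine le_antisymm (Nat.sInf_le hmem) (le_csInf ⟨_, hmem⟩ ?_)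
  rintro s ⟨r, hs⟩
  obtain ⟨f, hfinj, hsub⟩ := hs (upSeq r s) (upSeq_isFormation r s)
  set L := (Ic c).map f with hL
  have hLlen : L.length = c := by simp [hL, Ic]
  have hmapeq : (Ic c ++ Dc c).map f = L ++ L.reverse := by
    simp [hL, Dc, List.map_reverse]
  rw [hmapeq] at hsub
  have hLne : L ≠ [] := by
    intro h; rw [h] at hLlen; simp at hLlen; omega
  obtain ⟨X, b, hXb⟩ : ∃ X b, L = X ++ [b] :=
    ⟨L.dropLast, L.getLast hLne, (List.dropLast_append_getLast hLne).symm⟩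
  have hrev : L.reverse = b :: X.reverse := by rw [hXb]; simp
  have hdesc : desc (L ++ L.reverse) = desc L + 1 + desc L.reverse := by
    conv_lhs => rw [hrev, hXb]
    rw [desc_append_cons, if_pos le_rfl, ← hXb, ← hrev]
  have hnodup : L.Nodup := (List.nodup_range' (s := 1) (n := c)).map hfinj
  have h1 : c ≤ desc L + desc L.reverse + 1 := hLlen ▸ length_le_desc L hnodup
  have h2 : desc (L ++ L.reverse) + 1 ≤ s :=
    desc_of_sublist_upSeq r s _ hsub (by simp [hLne])
  omega
end

section
/- Fix c ≥ 2 and let u = I_c^{e_1} D_c^{e_2} I_c^{e_3} ... L_c^{e_n} with all e_i > 0 (L = I if n odd, D if n even). Let A = sum of e_i over odd i, B = sum of e_i over even i, M = max(A,B), m = min(A,B). Then l(u) = (c-1)m + M + floor(n/2). -/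
def costAux : ℕ → List ℕ → ℕ
  | _, [] => 0
  | p, a :: t => (if a ≤ p then 1 else 0) + costAux a t

lemma costAux_append (x : List ℕ) : ∀ (p : ℕ) (y : List ℕ),
    costAux p (x ++ y) = costAux p x + costAux (x.getLastD p) y := by
  induction x with
  | nil => intro p y; simp [costAux]
  | cons a t ih =>
      intro p y
      simp only [List.cons_append, costAux, List.append_eq, ih a y, List.getLastD_cons]
      ring

lemma rep_succ (l : List ℕ) (k : ℕ) : rep l (k+1) = l ++ rep l k := by
  simp [rep, List.replicate_succ]

lemma upSeq_succ (c k : ℕ) : upSeq c (k+1) = Ic c ++ upSeq c k := rep_succ _ _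

lemma mem_upSeq {c k x : ℕ} (h : x ∈ upSeq c k) : 1 ≤ x ∧ x ≤ c := by
  induction k with
  | zero => simp [upSeq, rep] at h
  | succ n ih =>
      rw [upSeq_succ] at h
      rcases List.mem_append.1 h with h | h
      · simp [Ic, List.mem_range'] at h; omega
      · exact ih h

lemma costAux_zero_of_pairwise : ∀ (t : List ℕ) (a : ℕ),
    List.Pairwise (· < ·) (a :: t) → costAux a t = 0 := by
  intro t
  induction t with
  | nil => intro a _; rfl
  | cons b s ih =>
      intro a h
      have h1 : a < b := (List.pairwise_cons.1 h).1 b (by simp)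
      have h2 := (List.pairwise_cons.1 h).2
      simp [costAux, Nat.not_le.2 h1, ih b h2]

lemma costAux_head_le {c p : ℕ} : ∀ {w : List ℕ}, (∀ x ∈ w, x ≤ c) →
    costAux p w ≤ costAux c w := by
  intro w hw
  match w with
  | [] => simp [costAux]
  | a :: t =>
      have : a ≤ c := hw a (by simp)
      simp only [costAux]
      have : (if a ≤ p then 1 else 0) ≤ (if a ≤ c then 1 else 0) := by
        simp [this]; split <;> omega
      omega

/-- Part A, lower bound direction. -/
lemma costAux_le_of_sublist {c : ℕ} : ∀ (k : ℕ) (w : List ℕ),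
    w.Sublist (upSeq c k) → costAux c w ≤ k := by
  intro k
  induction k with
  | zero =>
      intro w h
      simp [upSeq, rep] at h
      simp [h, costAux]
  | succ n ih =>
      intro w h
      rw [upSeq_succ, List.sublist_append_iff] at h
      obtain ⟨w1, w2, rfl, h1, h2⟩ := h
      rw [costAux_append]
      have hw1 : costAux c w1 ≤ 1 := by
        match w1, h1 with
        | [], _ => simp [costAux]
        | a :: t, h1 =>
            have hp : List.Pairwise (· < ·) (a :: t) :=
              (List.pairwise_lt_range' (s := 1) (n := c)).sublist h1
            have ha : a ≤ c := by
              have := h1.mem (List.mem_cons_self (a := a) (l := t))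
              simp [Ic, List.mem_range'] at this; omega
            simp [costAux, costAux_zero_of_pairwise t a hp, ha]
      have hw2c : costAux (w1.getLastD c) w2 ≤ costAux c w2 :=
        costAux_head_le (fun x hx => (mem_upSeq (h2.mem hx)).2)
      have := ih w2 h2
      omega

/-- Part A, upper bound aux. -/
lemma sublist_aux {c : ℕ} : ∀ (w : List ℕ), (∀ x ∈ w, 1 ≤ x ∧ x ≤ c) →
    ∀ a : ℕ, 1 ≤ a →
    w.Sublist (List.range' a (c+1-a) ++ upSeq c (costAux (a-1) w)) := by
  intro w
  induction w with
  | nil => intro _ a _; simp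
  | cons b t ih =>
      intro hw a ha
      have hb : 1 ≤ b ∧ b ≤ c := hw b (by simp)
      have ht : ∀ x ∈ t, 1 ≤ x ∧ x ≤ c := fun x hx => hw x (by simp [hx])
      by_cases hab : a ≤ b
      · -- b ∈ range' a (c+1-a), split
        have hsplit : List.range' a (c+1-a) = List.range' a (b-a) ++ b :: List.range' (b+1) (c-b) := by
          rw [show c+1-a = (b-a) + ((c-b)+1) by omega, ← List.range'_append]
          rw [show a + 1*(b-a) = b by omega, List.range'_succ]
        have hcost : costAux (a-1) (b :: t) = costAux b t := by
          simp [costAux]; omega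
        rw [hsplit, hcost, List.append_assoc, List.cons_append]
        refine List.Sublist.trans ?_ (List.sublist_append_right _ _)
        exact List.Sublist.cons₂ b (by
          have := ih ht (b+1) (by omega)
          simpa using this)
      · -- b < a : go to a fresh block
        have hcost : costAux (a-1) (b :: t) = 1 + costAux b t := by
          simp [costAux]; omega
        rw [hcost]
        have h1 : upSeq c (1 + costAux b t) = Ic c ++ upSeq c (costAux b t) := by
          rw [Nat.add_comm, upSeq_succ]
        rw [h1]
        have key : (b :: t).Sublist (Ic c ++ upSeq c (costAux b t)) := by
          have hsplit : Ic c = List.range' 1 (b-1) ++ b :: List.range' (b+1) (c-b) := by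
            unfold Ic
            conv_lhs => rw [show c = (b-1) + ((c-b)+1) by omega, ← List.range'_append]
            rw [show 1 + 1*(b-1) = b by omega, List.range'_succ]
          rw [hsplit, List.append_assoc, List.cons_append]
          refine List.Sublist.trans ?_ (List.sublist_append_right _ _)
          exact List.Sublist.cons₂ b (by
            have := ih ht (b+1) (by omega)
            simpa using this)
        exact key.trans (List.sublist_append_right _ _)

lemma sublist_upSeq_cost {c : ℕ} (hc : 1 ≤ c) (w : List ℕ)
    (hw : ∀ x ∈ w, 1 ≤ x ∧ x ≤ c) : w.Sublist (upSeq c (costAux c w)) := by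
  match w with
  | [] => simp
  | b :: t =>
      have hb := hw b (by simp)
      have h := sublist_aux (b :: t) hw 1 le_rfl
      have h0 : costAux 0 (b :: t) = costAux b t := by
        simp [costAux]; omega
      have hcc : costAux c (b :: t) = 1 + costAux b t := by
        simp [costAux]; omega
      rw [h0] at h
      rw [hcc, Nat.add_comm 1, upSeq_succ]
      have : c + 1 - 1 = c := by omega
      rw [this] at h
      exact h

lemma upSeq_mono {c : ℕ} {j k : ℕ} (h : j ≤ k) : (upSeq c j).Sublist (upSeq c k) := by
  induction k with
  | zero => have : j = 0 := by omega
            simp [this]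
  | succ n ih =>
      by_cases hj : j = n+1
      · simp [hj]
      · have := ih (by omega)
        rw [upSeq_succ]
        exact this.trans (List.sublist_append_right _ _)

/-! ## Part B: structure of altBlocks -/

def myAlt (c : ℕ) : Bool → List ℕ → List ℕ
  | _, [] => []
  | b, k :: t => rep (if b then Ic c else Dc c) k ++ myAlt c (!b) t


lemma altBlocks_aux (c : ℕ) : ∀ (e : List ℕ) (i : ℕ),
    (((e.zipIdx i).map Prod.swap).map (fun p => rep (if p.1 % 2 = 0 then Ic c else Dc c) p.2)).flatten
      = myAlt c (decide (i % 2 = 0)) e := by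
  intro e
  induction e with
  | nil => intro i; simp [myAlt]
  | cons k t ih =>
      intro i
      have h1 : ((k :: t).zipIdx i).map Prod.swap = (i, k) :: (t.zipIdx (i+1)).map Prod.swap := rfl
      rw [h1]
      simp only [List.map_cons, List.flatten_cons, myAlt, ih (i+1)]
      have h2 : decide ((i+1) % 2 = 0) = !decide (i % 2 = 0) := by
        rcases Nat.mod_two_eq_zero_or_one i with h | h <;> simp [Nat.add_mod, h]
      rw [h2]
      by_cases h : i % 2 = 0 <;> simp [h]

lemma altBlocks_eq_myAlt (c : ℕ) (e : List ℕ) : altBlocks c e = myAlt c true e := by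
  have := altBlocks_aux c e 0
  simpa [altBlocks] using this

def psum : Bool → List ℕ → ℕ
  | _, [] => 0
  | b, k :: t => (if b then k else 0) + psum (!b) t

def qsum : Bool → List ℕ → ℕ
  | _, [] => 0
  | b, k :: t => (if b then k - 1 else 0) + qsum (!b) t

def pcnt : Bool → List ℕ → ℕ
  | _, [] => 0
  | b, k :: t => (if b then 1 else 0) + pcnt (!b) t

lemma filter_sum_aux (e : List ℕ) : ∀ (i : ℕ),
    (((((e.zipIdx i).map Prod.swap).filter (fun p => p.1 % 2 = 0)).map Prod.snd).sum
        = psum (decide (i % 2 = 0)) e) ∧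
    (((((e.zipIdx i).map Prod.swap).filter (fun p => p.1 % 2 = 1)).map Prod.snd).sum
        = psum (!decide (i % 2 = 0)) e) := by
  induction e with
  | nil => intro i; simp [psum]
  | cons k t ih =>
      intro i
      have h1 : ((k :: t).zipIdx i).map Prod.swap = (i, k) :: (t.zipIdx (i+1)).map Prod.swap := rfl
      have h2 : decide ((i+1) % 2 = 0) = !decide (i % 2 = 0) := by
        rcases Nat.mod_two_eq_zero_or_one i with h | h <;> simp [Nat.add_mod, h]
      obtain ⟨ihA, ihB⟩ := ih (i+1)
      rw [h2] at ihA ihB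
      constructor
      · rw [h1]
        by_cases h : i % 2 = 0
        · simp only [List.filter_cons, psum]
          simp [h, ihA]
        · simp only [List.filter_cons, psum]
          simp [h, ihA]
      · rw [h1]
        by_cases h : i % 2 = 0
        · have h1' : ¬ (i % 2 = 1) := by omega
          simp only [List.filter_cons, psum]
          simp [h, h1', ihB]
        · have h1' : i % 2 = 1 := by omega
          simp only [List.filter_cons, psum]
          simp [h, h1', ihB]

lemma filter_sum_zero (e : List ℕ) :
    (((e.zipIdx.map Prod.swap).filter (fun p => p.1 % 2 = 0)).map Prod.snd).sum = psum true e := by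
  have := (filter_sum_aux e 0).1
  simpa using this

lemma filter_sum_one (e : List ℕ) :
    (((e.zipIdx.map Prod.swap).filter (fun p => p.1 % 2 = 1)).map Prod.snd).sum = psum false e := by
  have := (filter_sum_aux e 0).2
  simpa using this

lemma pcnt_length (e : List ℕ) :
    pcnt true e = (e.length + 1) / 2 ∧ pcnt false e = e.length / 2 := by
  induction e with
  | nil => simp [pcnt]
  | cons k t ih =>
      obtain ⟨ih1, ih2⟩ := ih
      refine ⟨?_, ?_⟩ <;> simp [pcnt, ih1, ih2] <;> omega

lemma psum_eq_qsum_add_pcnt : ∀ (e : List ℕ), (∀ x ∈ e, 0 < x) →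
    ∀ b, psum b e = qsum b e + pcnt b e := by
  intro e
  induction e with
  | nil => intro _ b; simp [psum, qsum, pcnt]
  | cons k t ih =>
      intro he b
      have hk : 0 < k := he k (by simp)
      have := ih (fun x hx => he x (by simp [hx])) (!b)
      simp only [psum, qsum, pcnt, this]
      cases b <;> simp <;> omega

/-! ## list utilities -/

lemma getLastD_ne_nil {l : List ℕ} (h : l ≠ []) (p q : ℕ) :
    l.getLastD p = l.getLastD q := by
  rw [List.getLastD_eq_getLast?, List.getLastD_eq_getLast?,
      List.getLast?_eq_getLast h]
  rfl

lemma headD_reverse (l : List ℕ) (d : ℕ) : l.reverse.headD d = l.getLastD d := by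
  rw [List.headD_eq_head?, List.head?_reverse, List.getLastD_eq_getLast?]

lemma getLastD_reverse (l : List ℕ) (d : ℕ) : l.reverse.getLastD d = l.headD d := by
  rw [← headD_reverse l.reverse d, List.reverse_reverse]

lemma getLastD_append {x y : List ℕ} (hy : y ≠ []) (d : ℕ) :
    (x ++ y).getLastD d = y.getLastD d := by
  rw [List.getLastD_eq_getLast?, List.getLastD_eq_getLast?,
      List.getLast?_append_of_ne_nil x hy]

lemma map_rep (f : ℕ → ℕ) (l : List ℕ) (k : ℕ) :
    List.map f (rep l k) = rep (List.map f l) k := by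
  simp [rep, List.map_flatten, List.map_replicate]

lemma rep_ne_nil {l : List ℕ} (hl : l ≠ []) {k : ℕ} (hk : 1 ≤ k) : rep l k ≠ [] := by
  cases k with
  | zero => omega
  | succ n =>
      rw [rep_succ]
      simp [hl]

lemma rep_getLastD {l : List ℕ} (hl : l ≠ []) : ∀ {k : ℕ}, 1 ≤ k → ∀ p,
    (rep l k).getLastD p = l.getLastD 0 := by
  intro k
  induction k with
  | zero => omega
  | succ n ih =>
      intro _ p
      rw [rep_succ]
      by_cases hn : 1 ≤ n
      · rw [getLastD_append (rep_ne_nil hl hn), ih hn]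
      · have : n = 0 := by omega
        subst this
        simp only [rep, List.replicate_zero, List.flatten_nil, List.append_nil]
        exact getLastD_ne_nil hl p 0

/-- cost of a repeated block -/
lemma rep_cost {U : List ℕ} (hU : U ≠ []) : ∀ {k : ℕ}, 1 ≤ k → ∀ p,
    costAux p (rep U k) = costAux p U + (k-1) * costAux (U.getLastD 0) U := by
  intro k
  induction k with
  | zero => omega
  | succ n ih =>
      intro _ p
      rw [rep_succ, costAux_append]
      by_cases hn : 1 ≤ n
      · rw [ih hn, getLastD_ne_nil hU p 0]
        have : n + 1 - 1 = (n - 1) + 1 := by omega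
        rw [this]
        ring
      · have : n = 0 := by omega
        subst this
        simp [rep, costAux]

/-- the internal cost of a block -/
def innerC : List ℕ → ℕ
  | [] => 0
  | a :: t => costAux a t

lemma costAux_eq_inner (p : ℕ) : ∀ {w : List ℕ}, w ≠ [] →
    costAux p w = (if w.headD 0 ≤ p then 1 else 0) + innerC w := by
  intro w hw
  match w with
  | a :: t => simp [costAux, innerC]

lemma inner_concat {x : List ℕ} (hx : x ≠ []) (a : ℕ) :
    innerC (x ++ [a]) = innerC x + (if a ≤ x.getLastD 0 then 1 else 0) := by
  match x with
  | x0 :: x' =>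
      show costAux x0 (x' ++ [a]) = costAux x0 x' + _
      rw [costAux_append, List.getLastD_cons]
      simp [costAux]

lemma inner_reverse : ∀ (w : List ℕ), List.Chain' (· ≠ ·) w →
    innerC w + innerC w.reverse = w.length - 1 := by
  intro w
  induction w with
  | nil => simp [innerC]
  | cons a t ih =>
      intro hch
      match t, hch with
      | [], _ => simp [innerC, costAux]
      | b :: s, hch =>
          have hab : a ≠ b := List.isChain_cons_cons.1 hch |>.1
          have hch' : List.Chain' (· ≠ ·) (b :: s) := (List.isChain_cons_cons.1 hch).2
          have ih' := ih hch'
          have h1 : innerC (a :: b :: s) = (if b ≤ a then 1 else 0) + innerC (b :: s) := by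
            simp [innerC, costAux]
          have h3 : innerC ((a :: b :: s).reverse)
              = innerC (b :: s).reverse + (if a ≤ b then 1 else 0) := by
            rw [show (a :: b :: s).reverse = (b :: s).reverse ++ [a] by simp,
                inner_concat (by simp) a, getLastD_reverse]
            simp
          rw [h1, h3]
          have hsum : (if b ≤ a then 1 else 0) + (if a ≤ b then 1 else 0) = 1 := by
            split_ifs <;> omega
          simp only [List.length_cons] at ih' ⊢
          omega

/-! ## unit facts -/

lemma getLastD_mem {t : List ℕ} (ht : t ≠ []) (d : ℕ) : t.getLastD d ∈ t := by
  rw [List.getLastD_eq_getLast?, List.getLast?_eq_getLast ht]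
  exact List.getLast_mem ht

lemma costAux_zero_lt : ∀ {t : List ℕ} {a : ℕ}, costAux a t = 0 → ∀ x ∈ t, a < x := by
  intro t
  induction t with
  | nil => intro a _ x hx; simp at hx
  | cons b s ih =>
      intro a h x hx
      simp only [costAux] at h
      have hab : a < b := by
        by_contra hc
        simp [Nat.le_of_not_lt hc] at h
      have hs : costAux b s = 0 := by omega
      rcases List.mem_cons.1 hx with rfl | hx
      · exact hab
      · exact lt_trans hab (ih hs x hx)

lemma head_ne_last {w : List ℕ} (hnd : w.Nodup) (hlen : 2 ≤ w.length) :
    w.headD 0 ≠ w.getLastD 0 := by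
  match w, hlen with
  | a :: t, hl =>
      have ht : t ≠ [] := by
        cases t with
        | nil => simp at hl
        | cons x s => simp
      have hL : (a :: t).getLastD 0 = t.getLastD a := List.getLastD_cons (a := 0) (b := a) (l := t)
      have hmem : t.getLastD a ∈ t := getLastD_mem ht a
      have : a ∉ t := (List.nodup_cons.1 hnd).1
      simp only [List.headD, hL]
      intro hcon
      exact this (hcon ▸ hmem)

lemma chain_ne_of_nodup {w : List ℕ} (hnd : w.Nodup) : List.Chain' (· ≠ ·) w :=
  List.Pairwise.isChain hnd

lemma unit_sum_c {w : List ℕ} (hnd : w.Nodup) (hlen : 2 ≤ w.length) :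
    costAux (w.getLastD 0) w + costAux (w.reverse.getLastD 0) w.reverse = w.length := by
  have hw : w ≠ [] := by intro h; subst h; simp at hlen
  have hwr : w.reverse ≠ [] := by simp [hw]
  rw [costAux_eq_inner _ hw, costAux_eq_inner _ hwr]
  rw [getLastD_reverse, headD_reverse]
  have hne := head_ne_last hnd hlen
  have hinner := inner_reverse w (chain_ne_of_nodup hnd)
  have : (if w.headD 0 ≤ w.getLastD 0 then 1 else 0)
      + (if w.getLastD 0 ≤ w.headD 0 then 1 else 0) = 1 := by
    split_ifs <;> omega
  omega

lemma unit_sum_h {w : List ℕ} (hnd : w.Nodup) (hlen : 2 ≤ w.length) :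
    costAux (w.headD 0) w + costAux (w.reverse.headD 0) w.reverse = w.length + 1 := by
  have hw : w ≠ [] := by intro h; subst h; simp at hlen
  have hwr : w.reverse ≠ [] := by simp [hw]
  rw [costAux_eq_inner _ hw, costAux_eq_inner _ hwr]
  rw [headD_reverse]
  have hinner := inner_reverse w (chain_ne_of_nodup hnd)
  simp only [le_refl, if_pos]
  omega

lemma unit_c_pos {w : List ℕ} (hnd : w.Nodup) (hlen : 2 ≤ w.length) :
    1 ≤ costAux (w.getLastD 0) w := by
  match w, hlen with
  | a :: t, hl =>
      have ht : t ≠ [] := by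
        cases t with
        | nil => simp at hl
        | cons x s => simp
      simp only [costAux, List.getLastD_cons]
      by_cases h : costAux a t = 0
      · have h2 := costAux_zero_lt h (t.getLastD a) (getLastD_mem ht a)
        rw [List.getLastD_eq_getLast?] at h2
        simp [Nat.le_of_lt h2]
      · omega

lemma unit_c_le_h {w : List ℕ} (hw : w ≠ []) :
    costAux (w.getLastD 0) w ≤ costAux (w.headD 0) w ∧
    costAux (w.headD 0) w ≤ costAux (w.getLastD 0) w + 1 := by
  rw [costAux_eq_inner _ hw, costAux_eq_inner _ hw]
  simp only [le_refl, if_pos]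
  split_ifs <;> omega

/-! ## main cost computation -/

lemma costAux_of_head_le {w : List ℕ} (hw : w ≠ []) {p : ℕ} (hp : w.headD 0 ≤ p) :
    costAux p w = costAux (w.headD 0) w := by
  rw [costAux_eq_inner _ hw, costAux_eq_inner _ hw, if_pos hp, if_pos le_rfl]

lemma V_eq_U_reverse (c : ℕ) (f : ℕ → ℕ) : (Dc c).map f = ((Ic c).map f).reverse := by
  simp [Dc, List.map_reverse]

lemma cost_myAlt (c : ℕ) (f : ℕ → ℕ) (U V : List ℕ)
    (hU : U = (Ic c).map f) (hV : V = (Dc c).map f) (hUne : U ≠ []) :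
    ∀ (e : List ℕ) (b : Bool) (p : ℕ), (∀ x ∈ e, 0 < x) →
    ((if b then U else V).headD 0 ≤ p) →
    costAux p ((myAlt c b e).map f) =
      pcnt b e * costAux (U.headD 0) U + qsum b e * costAux (U.getLastD 0) U
      + pcnt (!b) e * costAux (V.headD 0) V + qsum (!b) e * costAux (V.getLastD 0) V := by
  have hVU : V = U.reverse := by rw [hV, hU, V_eq_U_reverse]
  have hVne : V ≠ [] := by simp [hVU, hUne]
  intro e
  induction e with
  | nil => intro b p _ _; simp [myAlt, pcnt, qsum, costAux]
  | cons k t ih =>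
      intro b p he hhead
      have hk : 1 ≤ k := he k (by simp)
      have ht : ∀ x ∈ t, 0 < x := fun x hx => he x (by simp [hx])
      have hmap : (myAlt c b (k :: t)).map f
          = rep (if b then U else V) k ++ (myAlt c (!b) t).map f := by
        show (rep (if b then Ic c else Dc c) k ++ myAlt c (!b) t).map f = _
        rw [List.map_append, map_rep]
        congr 2
        cases b
        · simp [hV]
        · simp [hU]
      set W := if b then U else V with hWdef
      have hWne : W ≠ [] := by cases b <;> simp [hWdef, hUne, hVne]
      rw [hmap, costAux_append, rep_cost hWne hk, rep_getLastD hWne hk,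
          costAux_of_head_le hWne hhead]
      have hnexthead : (if !b then U else V).headD 0 = W.getLastD 0 := by
        cases b
        · simp only [hWdef, Bool.not_false, if_true, Bool.false_eq_true, if_false,
            hVU, getLastD_reverse]
        · simp only [hWdef, Bool.not_true, if_true, Bool.false_eq_true, if_false,
            hVU, headD_reverse]
      rw [ih (!b) (W.getLastD 0) ht (by rw [hnexthead])]
      cases b
      · simp only [hWdef, if_neg, Bool.not_false, Bool.not_true, pcnt, qsum,
          Bool.false_eq_true, if_false, if_true]
        ring
      · simp only [hWdef, Bool.not_true, Bool.not_false, pcnt, qsum, if_true,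
          Bool.false_eq_true, if_false]
        ring

/-! ## arithmetic -/

lemma key_ineq {A B d : ℕ} (h : B ≤ A) (hd : 1 ≤ d) : B * d + A ≤ A * d + B := by
  obtain ⟨d', rfl⟩ : ∃ d', d = d' + 1 := ⟨d - 1, by omega⟩
  obtain ⟨δ, rfl⟩ : ∃ δ, A = B + δ := ⟨A - B, by omega⟩
  nlinarith [Nat.zero_le (δ * d')]

lemma arith_lower (c nI nD qT qF hu cu hv cv : ℕ) (hc : 2 ≤ c)
    (h1 : hu + hv = c + 1) (h2 : cu + cv = c) (h3 : 1 ≤ cu) (h4 : 1 ≤ cv)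
    (h5 : cu ≤ hu) (h6 : hu ≤ cu + 1) (hn : nD ≤ nI) :
    (c-1) * min (nI+qT) (nD+qF) + max (nI+qT) (nD+qF) + nD
      ≤ nI*hu + qT*cu + nD*hv + qF*cv := by
  obtain ⟨d, rfl⟩ : ∃ d, hu = d + 1 := ⟨hu - 1, by omega⟩
  obtain ⟨d', rfl⟩ : ∃ d', hv = d' + 1 := ⟨hv - 1, by omega⟩
  have hdd : d + d' = c - 1 := by omega
  rw [← hdd]
  rcases le_total (nD + qF) (nI + qT) with hAB | hAB
  · rw [min_eq_right hAB, max_eq_left hAB]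
    have hcase : cu = d + 1 ∨ cu = d := by omega
    rcases hcase with h7 | h7
    · have h8 : cv = d' := by omega
      subst h7 h8
      nlinarith [Nat.mul_le_mul_right d hAB]
    · have h8 : cv = d' + 1 := by omega
      have hd1 : 1 ≤ d := by omega
      subst h7 h8
      nlinarith [key_ineq hAB hd1]
  · rw [min_eq_left hAB, max_eq_right hAB]
    have hcase : cu = d + 1 ∨ cu = d := by omega
    rcases hcase with h7 | h7
    · have h8 : cv = d' := by omega
      have hd1 : 1 ≤ d' := by omega
      subst h7 h8
      nlinarith [key_ineq hAB hd1]
    · have h8 : cv = d' + 1 := by omega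
      subst h7 h8
      nlinarith [Nat.mul_le_mul_right d' hAB]

/-! ## membership facts -/

lemma mem_rep {l : List ℕ} {k x : ℕ} (h : x ∈ rep l k) : x ∈ l := by
  induction k with
  | zero => simp [rep] at h
  | succ n ih =>
      rw [rep_succ] at h
      rcases List.mem_append.1 h with h | h
      · exact h
      · exact ih h

lemma mem_Ic {c x : ℕ} (h : x ∈ Ic c) : 1 ≤ x ∧ x ≤ c := by
  simp [Ic, List.mem_range'] at h; omega

lemma mem_Dc {c x : ℕ} (h : x ∈ Dc c) : 1 ≤ x ∧ x ≤ c := by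
  rw [Dc, List.mem_reverse] at h; exact mem_Ic h

lemma mem_myAlt {c : ℕ} : ∀ {e : List ℕ} {b : Bool} {x : ℕ},
    x ∈ myAlt c b e → 1 ≤ x ∧ x ≤ c := by
  intro e
  induction e with
  | nil => intro b x h; simp [myAlt] at h
  | cons k t ih =>
      intro b x h
      rcases List.mem_append.1 h with h | h
      · have := mem_rep h
        cases b
        · exact mem_Dc (by simpa using this)
        · exact mem_Ic (by simpa using this)
      · exact ih h

lemma Ic_subset_myAlt {c k : ℕ} {t : List ℕ} (hk : 1 ≤ k) {i : ℕ} (hi : i ∈ Ic c) :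
    i ∈ myAlt c true (k :: t) := by
  show i ∈ rep (if true then Ic c else Dc c) k ++ myAlt c false t
  apply List.mem_append_left
  obtain ⟨n, rfl⟩ : ∃ n, k = n + 1 := ⟨k - 1, by omega⟩
  simp only [if_pos]
  rw [rep_succ]
  exact List.mem_append_left _ hi

lemma Ic_ne_nil {c : ℕ} (hc : 1 ≤ c) : Ic c ≠ [] := by
  simp [Ic]; omega

lemma myAlt_ne_nil {c k : ℕ} {t : List ℕ} (hc : 1 ≤ c) (hk : 1 ≤ k) :
    myAlt c true (k :: t) ≠ [] := by
  show rep (if true then Ic c else Dc c) k ++ myAlt c false t ≠ []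
  simp only [if_pos]
  intro h
  rcases List.append_eq_nil_iff.1 h with ⟨h1, _⟩
  exact rep_ne_nil (Ic_ne_nil hc) hk h1

/-! ## head and last of mapped range -/

lemma map_range'_headD (f : ℕ → ℕ) {c : ℕ} (hc : 1 ≤ c) :
    ((List.range' 1 c).map f).headD 0 = f 1 := by
  obtain ⟨n, rfl⟩ : ∃ n, c = n + 1 := ⟨c - 1, by omega⟩
  rw [List.range'_succ]
  simp

lemma map_range'_getLastD (f : ℕ → ℕ) {c : ℕ} (hc : 1 ≤ c) :
    ((List.range' 1 c).map f).getLastD 0 = f c := by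
  obtain ⟨n, rfl⟩ : ∃ n, c = n + 1 := ⟨c - 1, by omega⟩
  rw [List.range'_concat]
  rw [List.map_append]
  rw [getLastD_append (by simp)]
  simp [Nat.add_comm]

/-! ## the identity assignment -/

lemma id_hu {c : ℕ} (hc : 1 ≤ c) :
    costAux ((List.range' 1 c).headD 0) (List.range' 1 c) = 1 := by
  obtain ⟨n, rfl⟩ : ∃ n, c = n + 1 := ⟨c - 1, by omega⟩
  rw [List.range'_succ]
  simp only [List.headD_cons, costAux]
  rw [costAux_zero_of_pairwise _ 1 (by rw [← List.range'_succ]; exact List.pairwise_lt_range' (s := 1) (n := n+1))]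
  simp

lemma id_cu {c : ℕ} (hc : 1 ≤ c) :
    costAux ((List.range' 1 c).getLastD 0) (List.range' 1 c) = 1 := by
  obtain ⟨n, rfl⟩ : ∃ n, c = n + 1 := ⟨c - 1, by omega⟩
  set L := (List.range' 1 (n+1)).getLastD 0 with hLdef
  have hne : List.range' 1 (n+1) ≠ [] := by simp
  have hL : 1 ≤ L := by
    have hmem := getLastD_mem hne 0
    rw [← hLdef] at hmem
    simp [List.mem_range'] at hmem
    omega
  rw [List.range'_succ]
  simp only [costAux]
  rw [costAux_zero_of_pairwise _ 1 (by rw [← List.range'_succ]; exact List.pairwise_lt_range' (s := 1) (n := n+1))]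
  simp [hL]

/-! ## the rotation assignment -/

def rotF (c : ℕ) : ℕ → ℕ :=
  fun x => if 1 ≤ x ∧ x ≤ c then (if x = c then c else c - x) else x + c + 1

lemma rotF_injective (c : ℕ) : Function.Injective (rotF c) := by
  intro x y h
  unfold rotF at h
  split_ifs at h <;> omega

lemma rotF_mem {c x : ℕ} (h1 : 1 ≤ x) (h2 : x ≤ c) : 1 ≤ rotF c x ∧ rotF c x ≤ c := by
  unfold rotF
  split_ifs <;> omega

lemma rot_aux {c : ℕ} (hc : 2 ≤ c) : ∀ (k a : ℕ), 1 ≤ a → a + k = c →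
    costAux (c - a) (List.map (rotF c) (List.range' (a+1) k)) = k - 1 := by
  intro k
  induction k with
  | zero => intro a _ _; simp [costAux]
  | succ n ih =>
      intro a ha hak
      rw [List.range'_succ, List.map_cons]
      simp only [costAux]
      by_cases hac : a + 1 = c
      · have hn : n = 0 := by omega
        subst hn
        have : rotF c (a+1) = c := by unfold rotF; simp [hac]; omega
        rw [this]
        have : ¬ (c ≤ c - a) := by omega
        simp [costAux, this]
      · have hv : rotF c (a+1) = c - a - 1 := by
          unfold rotF
          rw [if_pos (by omega), if_neg (by omega)]
          omega
        rw [hv]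
        have h1 : (if c - a - 1 ≤ c - a then 1 else 0) = 1 := by
          rw [if_pos (by omega)]
        have h2 : costAux (c - a - 1) (List.map (rotF c) (List.range' (a+1+1) n)) = n - 1 := by
          have := ih (a+1) (by omega) (by omega)
          have heq : c - (a+1) = c - a - 1 := by omega
          rw [heq] at this
          exact this
        rw [h1, h2]
        omega

lemma range'_split_head {c : ℕ} (hc : 1 ≤ c) :
    List.range' 1 c = 1 :: List.range' 2 (c-1) := by
  conv_lhs => rw [show c = (c-1)+1 by omega, List.range'_succ]

lemma rot_hu {c : ℕ} (hc : 2 ≤ c) :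
    costAux (((List.range' 1 c).map (rotF c)).headD 0) ((List.range' 1 c).map (rotF c))
      = c - 1 := by
  rw [map_range'_headD _ (by omega)]
  have hf1 : rotF c 1 = c - 1 := by
    unfold rotF
    rw [if_pos (by omega), if_neg (by omega)]
  rw [range'_split_head (by omega), List.map_cons]
  simp only [costAux, hf1, if_pos le_rfl]
  have h2 := rot_aux hc (c-1) 1 le_rfl (by omega)
  norm_num at h2
  omega

lemma rot_cu {c : ℕ} (hc : 2 ≤ c) :
    costAux (((List.range' 1 c).map (rotF c)).getLastD 0) ((List.range' 1 c).map (rotF c))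
      = c - 1 := by
  rw [map_range'_getLastD _ (by omega)]
  have hfc : rotF c c = c := by
    unfold rotF
    rw [if_pos (by omega), if_pos rfl]
  have hf1 : rotF c 1 = c - 1 := by
    unfold rotF
    rw [if_pos (by omega), if_neg (by omega)]
  rw [hfc, range'_split_head (by omega), List.map_cons]
  simp only [costAux, hf1]
  rw [if_pos (by omega)]
  have h2 := rot_aux hc (c-1) 1 le_rfl (by omega)
  norm_num at h2
  omega

/-! ## assembly -/

lemma headD_mem {l : List ℕ} (h : l ≠ []) : l.headD 0 ∈ l := by
  match l with
  | a :: t => simp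

lemma Ic_length (c : ℕ) : (Ic c).length = c := by simp [Ic]

lemma lower_bound {c : ℕ} (hc : 2 ≤ c) {k0 : ℕ} {t0 : List ℕ}
    (he : ∀ x ∈ (k0 :: t0), 0 < x) (f : ℕ → ℕ) (hf : Function.Injective f) (k : ℕ)
    (hsub : ((myAlt c true (k0 :: t0)).map f).Sublist (upSeq c k)) :
    (c-1) * min (psum true (k0 :: t0)) (psum false (k0 :: t0))
      + max (psum true (k0 :: t0)) (psum false (k0 :: t0)) + pcnt false (k0 :: t0) ≤ k := by
  set e := k0 :: t0 with he_def
  have hk0 : 1 ≤ k0 := he k0 (by simp [he_def])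
  have hcost := costAux_le_of_sublist (c := c) k _ hsub
  set U : List ℕ := (Ic c).map f with hUdef
  set V : List ℕ := (Dc c).map f with hVdef
  have hUne : U ≠ [] := by
    simp [hUdef]
    exact Ic_ne_nil (by omega)
  have hUlen : U.length = c := by simp [hUdef, Ic_length]
  have hUnodup : U.Nodup := by
    rw [hUdef]
    exact (List.nodup_range' (s := 1) (n := c)).map hf
  have hVU : V = U.reverse := by rw [hVdef, hUdef, V_eq_U_reverse]
  -- the head of U is ≤ c
  have hheadc : U.headD 0 ≤ c := by
    have hmem : U.headD 0 ∈ U := headD_mem hUne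
    rw [hUdef] at hmem
    obtain ⟨i, hi, hfi⟩ := List.mem_map.1 hmem
    have : i ∈ myAlt c true e := Ic_subset_myAlt hk0 hi
    have h2 : f i ∈ (myAlt c true e).map f := List.mem_map.2 ⟨i, this, rfl⟩
    have h3 := hsub.subset h2
    have h4 := (mem_upSeq h3).2
    rw [hUdef, ← hfi]
    exact h4
  rw [cost_myAlt c f U V hUdef hVdef hUne e true c he (by simpa using hheadc)] at hcost
  -- unit facts
  have h2le : 2 ≤ U.length := by omega
  have hs1 := unit_sum_h hUnodup h2le
  have hs2 := unit_sum_c hUnodup h2le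
  have hs3 := unit_c_pos hUnodup h2le
  have hs4 := unit_c_pos (w := U.reverse) (by simp [hUnodup]) (by simp; omega)
  have hs5 := unit_c_le_h (w := U) hUne
  rw [← hVU] at hs1 hs2 hs4
  rw [hUlen] at hs1 hs2
  -- counts
  have hpc := pcnt_length e
  have hnd_le : pcnt false e ≤ pcnt true e := by omega
  have hA : psum true e = pcnt true e + qsum true e := by
    rw [psum_eq_qsum_add_pcnt e he true]; omega
  have hB : psum false e = pcnt false e + qsum false e := by
    rw [psum_eq_qsum_add_pcnt e he false]; omega
  rw [hA, hB]
  calc (c-1) * min (pcnt true e + qsum true e) (pcnt false e + qsum false e)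
      + max (pcnt true e + qsum true e) (pcnt false e + qsum false e) + pcnt false e
      ≤ pcnt true e * costAux (U.headD 0) U + qsum true e * costAux (U.getLastD 0) U
        + pcnt false e * costAux (V.headD 0) V + qsum false e * costAux (V.getLastD 0) V := by
        apply arith_lower c _ _ _ _ _ _ _ _ hc hs1 hs2 hs3 hs4 hs5.1 hs5.2 hnd_le
    _ ≤ k := by simpa using hcost

lemma upper_bound {c : ℕ} (hc : 2 ≤ c) {k0 : ℕ} {t0 : List ℕ}
    (he : ∀ x ∈ (k0 :: t0), 0 < x) (f : ℕ → ℕ) (hf : Function.Injective f)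
    (hfmem : ∀ x, 1 ≤ x → x ≤ c → 1 ≤ f x ∧ f x ≤ c) (k : ℕ)
    (hk : pcnt true (k0 :: t0) * costAux (((Ic c).map f).headD 0) ((Ic c).map f)
        + qsum true (k0 :: t0) * costAux (((Ic c).map f).getLastD 0) ((Ic c).map f)
        + pcnt false (k0 :: t0) * costAux (((Dc c).map f).headD 0) ((Dc c).map f)
        + qsum false (k0 :: t0) * costAux (((Dc c).map f).getLastD 0) ((Dc c).map f) ≤ k) :
    Contains (upSeq c k) (myAlt c true (k0 :: t0)) := by
  set e := k0 :: t0 with he_def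
  set U : List ℕ := (Ic c).map f with hUdef
  have hUne : U ≠ [] := by
    simp [hUdef]
    exact Ic_ne_nil (by omega)
  -- entries of the mapped word are in [1,c]
  have hent : ∀ x ∈ (myAlt c true e).map f, 1 ≤ x ∧ x ≤ c := by
    intro x hx
    obtain ⟨i, hi, rfl⟩ := List.mem_map.1 hx
    have := mem_myAlt hi
    exact hfmem i this.1 this.2
  have hsub := sublist_upSeq_cost (by omega : 1 ≤ c) _ hent
  -- head of U is ≤ c
  have hheadc : U.headD 0 ≤ c := by
    have hmem : U.headD 0 ∈ U := headD_mem hUne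
    rw [hUdef] at hmem
    obtain ⟨i, hi, hfi⟩ := List.mem_map.1 hmem
    have := mem_Ic hi
    rw [hUdef]
    rw [← hfi] at *
    exact (hfmem i this.1 this.2).2
  rw [cost_myAlt c f U ((Dc c).map f) hUdef rfl hUne e true c he (by simpa using hheadc)] at hsub
  exact ⟨f, hf, hsub.trans (upSeq_mono (by rw [hUdef] at hk; exact hk))⟩

theorem stmt13 (c : ℕ) (hc : 2 ≤ c) (e : List ℕ) (he : ∀ x ∈ e, 0 < x)
    (hne : e ≠ []) :
    lval c (altBlocks c e) =
      (c - 1) * min ((((e.zipIdx.map Prod.swap).filter (fun p => p.1 % 2 = 0)).map Prod.snd).sum)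
                    ((((e.zipIdx.map Prod.swap).filter (fun p => p.1 % 2 = 1)).map Prod.snd).sum)
        + max ((((e.zipIdx.map Prod.swap).filter (fun p => p.1 % 2 = 0)).map Prod.snd).sum)
              ((((e.zipIdx.map Prod.swap).filter (fun p => p.1 % 2 = 1)).map Prod.snd).sum)
        + e.length / 2 := by
  obtain ⟨k0, t0, rfl⟩ : ∃ k0 t0, e = k0 :: t0 := by
    cases e with
    | nil => exact absurd rfl hne
    | cons a t => exact ⟨a, t, rfl⟩
  rw [filter_sum_zero, filter_sum_one, altBlocks_eq_myAlt]
  have hpc := pcnt_length (k0 :: t0)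
  have hlen2 : (k0 :: t0).length / 2 = pcnt false (k0 :: t0) := by omega
  rw [hlen2]
  set T := (c-1) * min (psum true (k0 :: t0)) (psum false (k0 :: t0))
      + max (psum true (k0 :: t0)) (psum false (k0 :: t0)) + pcnt false (k0 :: t0) with hT
  -- notation
  have hA : psum true (k0 :: t0) = pcnt true (k0 :: t0) + qsum true (k0 :: t0) := by
    rw [psum_eq_qsum_add_pcnt _ he true]; omega
  have hB : psum false (k0 :: t0) = pcnt false (k0 :: t0) + qsum false (k0 :: t0) := by
    rw [psum_eq_qsum_add_pcnt _ he false]; omega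
  have hIcnodup : (Ic c).Nodup := List.nodup_range' (s := 1) (n := c)
  have hIclen : 2 ≤ (Ic c).length := by rw [Ic_length]; omega
  have hDcIc : Dc c = (Ic c).reverse := rfl
  -- the element T is in the containment set
  have hTmem : Contains (upSeq c T) (myAlt c true (k0 :: t0)) := by
    rcases le_total (psum false (k0 :: t0)) (psum true (k0 :: t0)) with hAB | hAB
    · -- B ≤ A : use the identity assignment
      apply upper_bound hc he id Function.injective_id (fun x h1 h2 => ⟨h1, h2⟩) T
      rw [List.map_id, List.map_id]
      have hhu : costAux ((Ic c).headD 0) (Ic c) = 1 := id_hu (by omega)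
      have hcu : costAux ((Ic c).getLastD 0) (Ic c) = 1 := id_cu (by omega)
      have hs1 := unit_sum_h hIcnodup hIclen
      have hs2 := unit_sum_c hIcnodup hIclen
      rw [← hDcIc, Ic_length, hhu] at hs1
      rw [← hDcIc, Ic_length, hcu] at hs2
      have hhv : costAux ((Dc c).headD 0) (Dc c) = c := by omega
      have hcv : costAux ((Dc c).getLastD 0) (Dc c) = c - 1 := by omega
      rw [hhu, hcu, hhv, hcv, hT, min_eq_right hAB, max_eq_left hAB, hA, hB]
      obtain ⟨m, rfl⟩ : ∃ m, c = m + 1 := ⟨c - 1, by omega⟩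
      simp only [Nat.add_sub_cancel]
      exact le_of_eq (by ring)
    · -- A ≤ B : use the rotation assignment
      apply upper_bound hc he (rotF c) (rotF_injective c)
        (fun x h1 h2 => rotF_mem h1 h2) T
      have hhu : costAux (((Ic c).map (rotF c)).headD 0) ((Ic c).map (rotF c)) = c - 1 :=
        rot_hu hc
      have hcu : costAux (((Ic c).map (rotF c)).getLastD 0) ((Ic c).map (rotF c)) = c - 1 :=
        rot_cu hc
      have hUnodup : ((Ic c).map (rotF c)).Nodup := hIcnodup.map (rotF_injective c)
      have hUlen : 2 ≤ ((Ic c).map (rotF c)).length := by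
        rw [List.length_map, Ic_length]; omega
      have hs1 := unit_sum_h hUnodup hUlen
      have hs2 := unit_sum_c hUnodup hUlen
      have hrev : ((Ic c).map (rotF c)).reverse = (Dc c).map (rotF c) := by
        rw [V_eq_U_reverse]
      rw [hrev, hhu, List.length_map, Ic_length] at hs1
      rw [hrev, hcu, List.length_map, Ic_length] at hs2
      have hhv : costAux (((Dc c).map (rotF c)).headD 0) ((Dc c).map (rotF c)) = 2 := by omega
      have hcv : costAux (((Dc c).map (rotF c)).getLastD 0) ((Dc c).map (rotF c)) = 1 := by
        omega
      rw [hhu, hcu, hhv, hcv, hT, min_eq_left hAB, max_eq_right hAB, hA, hB]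
      obtain ⟨m, rfl⟩ : ∃ m, c = m + 1 := ⟨c - 1, by omega⟩
      simp only [Nat.add_sub_cancel]
      exact le_of_eq (by ring)
  have hlow : ∀ k ∈ {k | Contains (upSeq c k) (myAlt c true (k0 :: t0))}, T ≤ k := by
    rintro k ⟨f, hf, hsub⟩
    exact lower_bound hc he f hf k hsub
  exact le_antisymm (Nat.sInf_le hTmem) (le_csInf ⟨T, hTmem⟩ hlow)
end

section
/- For every x ≥ 1 and c ≥ 2, the minimum k such that alt(c,k) contains I_c^x is 2x - 1; moreover alt(c, 2x-1) has I_π^x as a subsequence for a permutation π of {1,...,c} only if π(c) = c. -/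
namespace Stmt15Aux

/-- greedy skip: unequal heads -/
lemma skip_head {x y : ℕ} {l t : List ℕ} (hne : x ≠ y) (h : (x::l).Sublist (y::t)) :
    (x::l).Sublist t := by
  cases h with
  | cons _ h => exact h
  | cons_cons => exact absurd rfl hne

lemma rep_succ (l : List ℕ) (x : ℕ) : rep l (x+1) = l ++ rep l x := by
  simp [rep, List.replicate_succ]

lemma rep_succ' (l : List ℕ) (x : ℕ) : rep l (x+1) = rep l x ++ l := by
  simp [rep, List.replicate_succ']

lemma rep_zero (l : List ℕ) : rep l 0 = [] := rfl

lemma rep_filter (p : ℕ → Bool) (l : List ℕ) : ∀ x, (rep l x).filter p = rep (l.filter p) x := by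
  intro x
  induction x with
  | zero => rfl
  | succ x ih => rw [rep_succ, rep_succ, List.filter_append, ih]

lemma rep_reverse (l : List ℕ) : ∀ x, (rep l x).reverse = rep l.reverse x := by
  intro x
  induction x with
  | zero => rfl
  | succ x ih => rw [rep_succ, rep_succ', List.reverse_append, ih]

lemma cons_rep_swap (a b : ℕ) : ∀ x, b :: rep [a,b] x = rep [b,a] x ++ [b] := by
  intro x
  induction x with
  | zero => rfl
  | succ x ih =>
    rw [rep_succ, rep_succ]
    simp only [List.cons_append, List.nil_append]
    rw [ih]

lemma rep_eq_nil {a b x : ℕ} (h : rep [a,b] x = []) : x = 0 := by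
  cases x with
  | zero => rfl
  | succ x => rw [rep_succ] at h; simp at h

/-- Core two-letter counting lemma.  `rep [a,b,b,a] m` is the `{a,b}`-projection of
`alt(c, 2m)`. -/
lemma core {a b : ℕ} (hab : a ≠ b) : ∀ m : ℕ,
    (∀ x, (rep [b,a] x).Sublist (rep [a,b,b,a] m) → x ≤ m) ∧
    (∀ x, (rep [b,a] x ++ [a]).Sublist (rep [a,b,b,a] m) → x + 1 ≤ m) ∧
    (∀ x, (rep [b,a] x ++ [b]).Sublist (rep [a,b,b,a] m) → x + 1 ≤ m) ∧
    (∀ x, (rep [a,b] x).Sublist (rep [a,b,b,a] m) → x ≤ m) := by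
  have hba : b ≠ a := hab.symm
  intro m
  induction m with
  | zero =>
    refine ⟨fun x h => ?_, fun x h => ?_, fun x h => ?_, fun x h => ?_⟩ <;>
      rw [rep_zero, List.sublist_nil] at h
    · exact Nat.le_of_eq (rep_eq_nil h)
    · simp at h
    · simp at h
    · exact Nat.le_of_eq (rep_eq_nil h)
  | succ m ih =>
    obtain ⟨ih1, ih2, ih3, ih4⟩ := ih
    have hW : rep [a,b,b,a] (m+1) = a :: b :: b :: a :: rep [a,b,b,a] m := by
      rw [rep_succ]; rfl
    refine ⟨fun x h => ?_, fun x h => ?_, fun x h => ?_, fun x h => ?_⟩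
    · cases x with
      | zero => exact Nat.zero_le _
      | succ x =>
        rw [rep_succ, hW] at h
        simp only [List.cons_append, List.nil_append] at h
        have h1 := skip_head hba h
        have h2 := List.cons_sublist_cons.mp h1
        have h3 := skip_head hab h2
        have h4 := List.cons_sublist_cons.mp h3
        exact Nat.succ_le_succ (ih1 x h4)
    · cases x with
      | zero => exact Nat.succ_le_succ (Nat.zero_le _)
      | succ x =>
        rw [rep_succ, hW] at h
        simp only [List.cons_append, List.nil_append, List.append_assoc] at h
        have h1 := skip_head hba h
        have h2 := List.cons_sublist_cons.mp h1
        have h3 := skip_head hab h2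
        have h4 := List.cons_sublist_cons.mp h3
        exact Nat.succ_le_succ (ih2 x h4)
    · cases x with
      | zero => exact Nat.succ_le_succ (Nat.zero_le _)
      | succ x =>
        rw [rep_succ, hW] at h
        simp only [List.cons_append, List.nil_append, List.append_assoc] at h
        have h1 := skip_head hba h
        have h2 := List.cons_sublist_cons.mp h1
        have h3 := skip_head hab h2
        have h4 := List.cons_sublist_cons.mp h3
        exact Nat.succ_le_succ (ih3 x h4)
    · cases x with
      | zero => exact Nat.zero_le _
      | succ x =>
        rw [rep_succ, hW] at h
        simp only [List.cons_append, List.nil_append] at h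
        have h1 := List.cons_sublist_cons.mp h
        have h2 := List.cons_sublist_cons.mp h1
        cases x with
        | zero => exact Nat.succ_le_succ (Nat.zero_le _)
        | succ x =>
          rw [rep_succ] at h2
          simp only [List.cons_append, List.nil_append] at h2
          have h3 := skip_head hab h2
          have h4 := List.cons_sublist_cons.mp h3
          rw [cons_rep_swap] at h4
          exact Nat.succ_le_succ (ih3 x h4)

/-- odd variant of the `[a,b]` bound -/
lemma coreOdd2 {a b : ℕ} (hab : a ≠ b) (m x : ℕ)
    (h : (rep [a,b] x).Sublist (rep [a,b,b,a] m ++ [a,b])) : x ≤ m + 1 := by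
  have h' := h.reverse
  rw [rep_reverse, List.reverse_append, rep_reverse] at h'
  simp only [List.reverse_cons, List.reverse_nil, List.nil_append] at h'
  -- h' : rep [b,a] x <+ [b,a] ++ rep [b,a,...]... careful with reverse of [a,b,b,a]
  cases x with
  | zero => exact Nat.zero_le _
  | succ x =>
    rw [rep_succ] at h'
    simp only [List.cons_append, List.nil_append] at h'
    have h1 := List.cons_sublist_cons.mp h'
    have h2 := List.cons_sublist_cons.mp h1
    exact Nat.succ_le_succ ((core hab m).1 x h2)

/-- odd variant of the `[b,a]` bound -/
lemma coreOdd1 {a b : ℕ} (hab : a ≠ b) (m x : ℕ)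
    (h : (rep [b,a] x).Sublist (rep [a,b,b,a] m ++ [a,b])) : x ≤ m := by
  have h' := h.reverse
  rw [rep_reverse, List.reverse_append, rep_reverse] at h'
  simp only [List.reverse_cons, List.reverse_nil, List.nil_append] at h'
  cases x with
  | zero => exact Nat.zero_le _
  | succ x =>
    rw [rep_succ] at h'
    simp only [List.cons_append, List.nil_append] at h'
    have h1 := skip_head hab h'
    have h2 := List.cons_sublist_cons.mp h1
    rw [cons_rep_swap] at h2
    exact (core hab m).2.2.1 x h2




lemma pair_eq {a b : ℕ} (hab : a ≠ b) (l : List ℕ) (hnd : l.Nodup) (ha : a ∈ l) (hb : b ∈ l)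
    (hall : ∀ z ∈ l, z = a ∨ z = b) : l = [a,b] ∨ l = [b,a] := by
  cases l with
  | nil => simp at ha
  | cons z1 t1 =>
    cases t1 with
    | nil =>
      simp at ha hb
      omega
    | cons z2 t2 =>
      have h1 : z1 = a ∨ z1 = b := hall z1 (by simp)
      have h2 : z2 = a ∨ z2 = b := hall z2 (by simp)
      rw [List.nodup_cons] at hnd
      obtain ⟨hz1, hnd2⟩ := hnd
      rw [List.nodup_cons] at hnd2
      obtain ⟨hz2, -⟩ := hnd2
      have h12 : z1 ≠ z2 := by simp at hz1; tauto
      have ht : t2 = [] := by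
        cases t2 with
        | nil => rfl
        | cons w t3 =>
          exfalso
          have hw := hall w (by simp)
          have hw1 : z1 ≠ w := by simp at hz1; tauto
          have hw2 : z2 ≠ w := by simp at hz2; tauto
          omega
      subst ht
      have : (z1 = a ∧ z2 = b) ∨ (z1 = b ∧ z2 = a) := by omega
      rcases this with ⟨rfl, rfl⟩ | ⟨rfl, rfl⟩
      · exact Or.inl rfl
      · exact Or.inr rfl

lemma filter_pair {a b : ℕ} (hab : a ≠ b) (l : List ℕ) (hnd : l.Nodup) (ha : a ∈ l) (hb : b ∈ l) :
    l.filter (fun v => decide (v = a ∨ v = b)) = [a,b] ∨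
    l.filter (fun v => decide (v = a ∨ v = b)) = [b,a] := by
  refine pair_eq hab _ (hnd.filter _) ?_ ?_ ?_
  · rw [List.mem_filter]; exact ⟨ha, by simp⟩
  · rw [List.mem_filter]; exact ⟨hb, by simp⟩
  · intro z hz
    rw [List.mem_filter] at hz
    simpa using hz.2

lemma filter_Ic {a b c : ℕ} (h1 : 1 ≤ a) (hab : a < b) (hbc : b ≤ c) :
    (Ic c).filter (fun v => decide (v = a ∨ v = b)) = [a, b] := by
  have hnd : (Ic c).Nodup := by
    rw [Ic]; exact List.nodup_range'
  have ha : a ∈ Ic c := by rw [Ic, List.mem_range'_1]; omega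
  have hb : b ∈ Ic c := by rw [Ic, List.mem_range'_1]; omega
  rcases filter_pair (by omega : a ≠ b) _ hnd ha hb with h | h
  · exact h
  · exfalso
    have hp : ((Ic c).filter (fun v => decide (v = a ∨ v = b))).Pairwise (· < ·) :=
      (List.pairwise_lt_range' (s := 1) (n := c)).sublist List.filter_sublist
    rw [h] at hp
    simp at hp
    omega

lemma filter_Dc {a b c : ℕ} (h1 : 1 ≤ a) (hab : a < b) (hbc : b ≤ c) :
    (Dc c).filter (fun v => decide (v = a ∨ v = b)) = [b, a] := by
  rw [Dc, List.filter_reverse, filter_Ic h1 hab hbc]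
  rfl

lemma altSeq_succ (c k : ℕ) :
    altSeq c (k+1) = altSeq c k ++ (if k % 2 = 0 then Ic c else Dc c) := by
  simp [altSeq, List.range_succ]

lemma filter_alt {a b c : ℕ} (h1 : 1 ≤ a) (hab : a < b) (hbc : b ≤ c) : ∀ m : ℕ,
    (altSeq c (2*m)).filter (fun v => decide (v = a ∨ v = b)) = rep [a,b,b,a] m ∧
    (altSeq c (2*m+1)).filter (fun v => decide (v = a ∨ v = b))
      = rep [a,b,b,a] m ++ [a,b] := by
  intro m
  induction m with
  | zero =>
    constructor
    · simp [altSeq, rep]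
    · have : (2*0+1) = 0 + 1 := by omega
      rw [this, altSeq_succ, if_pos (by omega)]
      simp only [List.filter_append]
      rw [filter_Ic h1 hab hbc]
      simp [altSeq, rep]
  | succ m ih =>
    have heven : (altSeq c (2*(m+1))).filter (fun v => decide (v = a ∨ v = b))
        = rep [a,b,b,a] (m+1) := by
      have e : 2*(m+1) = (2*m+1)+1 := by omega
      rw [e, altSeq_succ, if_neg (by omega)]
      rw [List.filter_append, ih.2, filter_Dc h1 hab hbc, rep_succ']
      simp
    refine ⟨heven, ?_⟩
    rw [altSeq_succ, if_pos (by omega), List.filter_append, heven, filter_Ic h1 hab hbc]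

lemma iperm_nodup {c : ℕ} (π : Equiv.Perm (Fin c)) : (Iperm π).Nodup := by
  rw [Iperm, List.nodup_ofFn]
  intro i j hij
  simp only at hij
  exact π.injective (Fin.ext (by omega))

lemma iperm_mem {c : ℕ} (π : Equiv.Perm (Fin c)) (v : ℕ) (h1 : 1 ≤ v) (h2 : v ≤ c) :
    v ∈ Iperm π := by
  rw [Iperm, List.mem_ofFn]
  refine ⟨π.symm ⟨v-1, by omega⟩, ?_⟩
  simp only [Equiv.apply_symm_apply]
  omega

lemma lower {c x : ℕ} (hc : 2 ≤ c) (hx : 1 ≤ x) (k : ℕ) (π : Equiv.Perm (Fin c))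
    (h : (rep (Iperm π) x).Sublist (altSeq c k)) : 2 * x - 1 ≤ k := by
  have h1c : (1:ℕ) ≠ c := by omega
  have hf := h.filter (fun v => decide (v = 1 ∨ v = c))
  rw [rep_filter] at hf
  have hpair := filter_pair h1c (Iperm π) (iperm_nodup π)
    (iperm_mem π 1 le_rfl (by omega)) (iperm_mem π c (by omega) le_rfl)
  rcases Nat.even_or_odd k with ⟨m, hm⟩ | ⟨m, hm⟩
  · have hk : k = 2*m := by omega
    subst hk
    rw [(filter_alt le_rfl (by omega) le_rfl m).1] at hf
    rcases hpair with he | he <;> rw [he] at hf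
    · have := (core h1c m).2.2.2 x hf; omega
    · have := (core h1c m).1 x hf; omega
  · have hk : k = 2*m+1 := by omega
    subst hk
    rw [(filter_alt le_rfl (by omega) le_rfl m).2] at hf
    rcases hpair with he | he <;> rw [he] at hf
    · have := coreOdd2 h1c m x hf; omega
    · have := coreOdd1 h1c m x hf; omega

lemma lastc {c x : ℕ} (hc : 2 ≤ c) (hx : 1 ≤ x) (π : Equiv.Perm (Fin c))
    (h : (rep (Iperm π) x).Sublist (altSeq c (2*x-1)))
    (hne : π ⟨c - 1, Nat.sub_lt (by omega) one_pos⟩ ≠ ⟨c - 1, Nat.sub_lt (by omega) one_pos⟩) : False := by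
  obtain ⟨n, rfl⟩ : ∃ n, c = n + 1 := ⟨c - 1, by omega⟩
  set v : ℕ := (π ⟨n, by omega⟩).val + 1 with hv
  have hvlt : v < n + 1 := by
    have h1 : (π ⟨n, by omega⟩).val < n + 1 := (π _).isLt
    have h2 : (π ⟨n, by omega⟩).val ≠ n := by
      intro he
      exact hne (Fin.ext (by simpa using he))
    omega
  have hvc : v ≠ n + 1 := by omega
  have hv1 : 1 ≤ v := by omega
  -- the filtered Iperm ends with v
  have hconcat : Iperm π = (List.ofFn fun i : Fin n => (π i.castSucc).val + 1) ++ [v] := by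
    rw [Iperm, List.ofFn_succ']
    rw [List.concat_eq_append]
    congr 1
  have hfilter_last : (Iperm π).filter (fun z => decide (z = v ∨ z = n + 1))
      = ((List.ofFn fun i : Fin n => (π i.castSucc).val + 1).filter
          (fun z => decide (z = v ∨ z = n + 1))) ++ [v] := by
    rw [hconcat, List.filter_append]
    congr 1
    simp
  have hpair := filter_pair hvc (Iperm π) (iperm_nodup π)
    (iperm_mem π v hv1 (by omega)) (iperm_mem π (n+1) (by omega) le_rfl)
  have hC : (Iperm π).filter (fun z => decide (z = v ∨ z = n + 1)) = [n+1, v] := by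
    rcases hpair with he | he
    · exfalso
      rw [hfilter_last] at he
      have := congrArg List.reverse he
      simp [List.reverse_append] at this
      omega
    · exact he
  have hf := h.filter (fun z => decide (z = v ∨ z = n + 1))
  rw [rep_filter, hC] at hf
  obtain ⟨y, rfl⟩ : ∃ y, x = y + 1 := ⟨x - 1, by omega⟩
  have e : 2*(y+1)-1 = 2*y+1 := by omega
  rw [e, (filter_alt hv1 (by omega) le_rfl y).2] at hf
  have := coreOdd1 (by omega : v ≠ n+1) y (y+1) hf
  omega

lemma iperm_one (c : ℕ) : Iperm (1 : Equiv.Perm (Fin c)) = Ic c := by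
  apply List.ext_getElem
  · simp [Iperm, Ic]
  · intro i h1 h2
    simp [Iperm, Ic]
    omega

lemma upper (c x : ℕ) : (rep (Ic c) (x+1)).Sublist (altSeq c (2*x+1)) := by
  induction x with
  | zero =>
    have h1 : rep (Ic c) 1 = Ic c := by simp [rep]
    have h2 : altSeq c 1 = Ic c := by
      have : List.range 1 = [0] := rfl
      simp [altSeq, this]
    rw [h1, h2]
  | succ x ih =>
    have e1 : 2*(x+1)+1 = ((2*x+1)+1)+1 := by omega
    rw [e1, altSeq_succ, altSeq_succ, if_neg (by omega), if_pos (by omega), rep_succ']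
    exact (ih.trans (List.sublist_append_left _ _)).append (List.Sublist.refl _)

end Stmt15Aux

theorem stmt15 (c x : ℕ) (hc : 2 ≤ c) (hx : 1 ≤ x) :
    sInf {k | ∃ π : Equiv.Perm (Fin c), (rep (Iperm π) x).Sublist (altSeq c k)} = 2 * x - 1 ∧
    ∀ π : Equiv.Perm (Fin c), (rep (Iperm π) x).Sublist (altSeq c (2 * x - 1)) →
      π ⟨c - 1, by omega⟩ = ⟨c - 1, by omega⟩ := by
  have hmem : 2 * x - 1 ∈ {k | ∃ π : Equiv.Perm (Fin c), (rep (Iperm π) x).Sublist (altSeq c k)} := by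
    refine ⟨1, ?_⟩
    rw [Stmt15Aux.iperm_one]
    obtain ⟨y, rfl⟩ : ∃ y, x = y + 1 := ⟨x - 1, by omega⟩
    have e : 2*(y+1)-1 = 2*y+1 := by omega
    rw [e]
    exact Stmt15Aux.upper c y
  constructor
  · refine le_antisymm (Nat.sInf_le hmem) ?_
    obtain ⟨π, hπ⟩ := Nat.sInf_mem ⟨_, hmem⟩
    exact Stmt15Aux.lower hc hx _ π hπ
  · intro π hπ
    by_contra hne
    exact Stmt15Aux.lastc hc hx π hπ hne
end

section
/- For every c ≥ 2 and permutation π of {1,...,c}, I_π D_π is a subsequence of I_c^c D_c if and only if π(1) < π(2). -/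
/-- number of adjacent non-ascending pairs -/
def nonAsc : List ℕ → ℕ
  | [] => 0
  | [_] => 0
  | a :: b :: t => (if b ≤ a then 1 else 0) + nonAsc (b :: t)

lemma nonAsc_cons_cons (a b : ℕ) (t : List ℕ) :
    nonAsc (a :: b :: t) = (if b ≤ a then 1 else 0) + nonAsc (b :: t) := rfl

lemma nonAsc_split : ∀ (u : List ℕ) (a : ℕ) (v : List ℕ),
    nonAsc (u ++ a :: v) = nonAsc (u ++ [a]) + nonAsc (a :: v)
  | [], a, v => by simp [nonAsc]
  | [x], a, v => by simp [nonAsc_cons_cons, nonAsc]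
  | x :: y :: u, a, v => by
    have ih := nonAsc_split (y :: u) a v
    simp only [List.cons_append, nonAsc_cons_cons] at *
    omega

lemma le_nonAsc_snoc : ∀ (u : List ℕ) (a : ℕ), nonAsc u ≤ nonAsc (u ++ [a])
  | [], a => by simp [nonAsc]
  | [x], a => by simp [nonAsc]
  | x :: y :: u, a => by
    have ih := le_nonAsc_snoc (y :: u) a
    simp only [List.cons_append, nonAsc_cons_cons] at *
    omega

lemma nonAsc_snoc_le : ∀ (u : List ℕ) (a : ℕ), nonAsc (u ++ [a]) ≤ nonAsc u + 1
  | [], a => by simp [nonAsc]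
  | [x], a => by simp [nonAsc_cons_cons, nonAsc]; split <;> omega
  | x :: y :: u, a => by
    have ih := nonAsc_snoc_le (y :: u) a
    simp only [List.cons_append, nonAsc_cons_cons] at *
    omega

lemma nonAsc_prefix_le (u : List ℕ) : ∀ (v : List ℕ), nonAsc u ≤ nonAsc (u ++ v)
  | [] => by simp
  | a :: v => by
    rw [nonAsc_split]
    exact le_trans (le_nonAsc_snoc u a) (Nat.le_add_right _ _)

lemma nonAsc_eq_zero_of_chain' : ∀ {u : List ℕ}, List.Chain' (· < ·) u → nonAsc u = 0
  | [], _ => rfl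
  | [_], _ => rfl
  | a :: b :: t, h => by
    unfold List.Chain' at h
    rw [List.isChain_cons_cons] at h
    rw [nonAsc_cons_cons, nonAsc_eq_zero_of_chain' h.2]
    simp; omega

lemma nonAsc_reverse : ∀ (m : List ℕ), m.Nodup → m ≠ [] →
    nonAsc m + nonAsc m.reverse = m.length - 1
  | [], _, h => absurd rfl h
  | [a], _, _ => rfl
  | a :: b :: t, hnd, _ => by
    have hab : a ≠ b := by
      intro h; subst h; simp at hnd
    have ih := nonAsc_reverse (b :: t) (hnd.of_cons) (by simp)
    have hrev : (a :: b :: t).reverse = (b :: t).reverse ++ [a] := by simp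
    have hrev2 : (b :: t).reverse = t.reverse ++ [b] := by simp
    have e1 : nonAsc ((a :: b :: t).reverse)
        = nonAsc ((b :: t).reverse) + (if a ≤ b then 1 else 0) := by
      rw [hrev, hrev2, List.append_assoc, List.singleton_append, nonAsc_split]
      have hba : nonAsc [b, a] = if a ≤ b then 1 else 0 := by simp [nonAsc]
      rw [hba]
    rw [e1, nonAsc_cons_cons]
    simp only [List.length_cons] at *
    have hs : (if a ≤ b then 1 else 0) + (if b ≤ a then 1 else 0) = 1 := by
      split_ifs <;> omega
    omega

lemma nonAsc_palindrome (m : List ℕ) (hnd : m.Nodup) (hm : m ≠ []) :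
    nonAsc (m ++ m.reverse) = m.length := by
  obtain ⟨m₀, y, hm'⟩ := List.eq_nil_or_concat m |>.resolve_left hm
  rw [List.concat_eq_append] at hm'
  subst hm'
  have hrev : (m₀ ++ [y]).reverse = y :: m₀.reverse := by simp
  rw [hrev, nonAsc_split]
  have h1 : nonAsc (m₀ ++ [y] ++ [y]) = nonAsc (m₀ ++ [y]) + 1 := by
    have h2 : m₀ ++ [y] ++ [y] = m₀ ++ (y :: [y]) := by simp
    rw [h2, nonAsc_split]
    simp [nonAsc]
  rw [h1, ← hrev]
  have := nonAsc_reverse (m₀ ++ [y]) hnd (by simp)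
  have hl : (m₀ ++ [y]).length = m₀.length + 1 := by simp
  omega

def extra : List ℕ → ℕ → ℕ
  | [], _ => 0
  | a :: _, t => if a ≤ t then 1 else 0

lemma pairwise_Ic (c : ℕ) : List.Pairwise (· < ·) (Ic c) := List.pairwise_lt_range' (s := 1) (n := c)

lemma embed_aux (c : ℕ) : ∀ (w : List ℕ), (∀ x ∈ w, 1 ≤ x ∧ x ≤ c) → ∀ t,
    w.Sublist (List.range' (t+1) (c-t) ++ rep (Ic c) (nonAsc w + extra w t)) := by
  intro w
  induction w with
  | nil => intro _ t; simp
  | cons a w' ih =>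
    intro hw t
    obtain ⟨ha1, ha2⟩ := hw a (by simp)
    have hcount : nonAsc w' + extra w' a = nonAsc (a :: w') := by
      cases w' with
      | nil => simp [nonAsc, extra]
      | cons b w'' => rw [nonAsc_cons_cons]; simp [extra]; omega
    have step : (a :: w').Sublist
        (List.range' a (c+1-a) ++ rep (Ic c) (nonAsc (a :: w'))) := by
      have h1 := ih (fun x hx => hw x (List.mem_cons_of_mem _ hx)) a
      rw [hcount] at h1
      have hr : List.range' a (c+1-a) = a :: List.range' (a+1) (c-a) := by
        have he : c+1-a = (c-a)+1 := by omega
        rw [he, List.range'_succ]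
      rw [hr, List.cons_append]
      exact h1.cons₂ a
    rcases le_or_gt a t with h | h
    · have hx : extra (a :: w') t = 1 := by simp [extra, h]
      have hsplit0 : (a :: w').Sublist (rep (Ic c) (nonAsc (a :: w') + 1)) := by
        rw [rep_succ]
        have hr2 : List.range' 1 (a-1) ++ List.range' a (c+1-a) = List.range' 1 c := by
          have h3 := List.range'_append (s := 1) (m := a-1) (n := c+1-a) (step := 1)
          rw [Nat.add_comm (a-1) (c+1-a)] at h3
          have e1 : 1 + 1*(a-1) = a := by omega
          have e2 : (c+1-a) + (a-1) = c := by omega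
          rw [e1, e2] at h3
          exact h3
        have h4 : (a :: w').Sublist (List.range' 1 (a-1) ++
            (List.range' a (c+1-a) ++ rep (Ic c) (nonAsc (a :: w')))) :=
          step.trans (List.sublist_append_right _ _)
        rw [← List.append_assoc, hr2] at h4
        exact h4
      rw [hx]
      exact hsplit0.trans (List.sublist_append_right _ _)
    · have hx : extra (a :: w') t = 0 := by
        have : ¬ a ≤ t := by omega
        simp [extra, this]
      rw [hx, Nat.add_zero]
      have hr2 : List.range' (t+1) (a-1-t) ++ List.range' a (c+1-a)
          = List.range' (t+1) (c-t) := by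
        have h3 := List.range'_append (s := t+1) (m := a-1-t) (n := c+1-a) (step := 1)
        rw [Nat.add_comm (a-1-t) (c+1-a)] at h3
        have e1 : t+1 + 1*(a-1-t) = a := by omega
        have e2 : (c+1-a) + (a-1-t) = c-t := by omega
        rw [e1, e2] at h3
        exact h3
      have h4 : (a :: w').Sublist (List.range' (t+1) (a-1-t) ++
          (List.range' a (c+1-a) ++ rep (Ic c) (nonAsc (a :: w')))) :=
        step.trans (List.sublist_append_right _ _)
      rw [← List.append_assoc, hr2] at h4
      exact h4

lemma nonAsc_lt_of_sublist_rep (c : ℕ) : ∀ (k : ℕ) (w : List ℕ), w ≠ [] →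
    w.Sublist (rep (Ic c) k) → nonAsc w < k := by
  intro k
  induction k with
  | zero =>
    intro w hw h
    simp [rep] at h
    exact absurd h hw
  | succ k ih =>
    intro w hw h
    rw [rep_succ, List.sublist_append_iff] at h
    obtain ⟨u, v, rfl, hu, hv⟩ := h
    have hu0 : nonAsc u = 0 :=
      nonAsc_eq_zero_of_chain' (((pairwise_Ic c).sublist hu).isChain)
    cases v with
    | nil => rw [List.append_nil]; omega
    | cons b v' =>
      have hv' : nonAsc (b :: v') < k := ih _ (by simp) hv
      have h1 := nonAsc_split u b v'
      have h2 := nonAsc_snoc_le u b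
      omega


theorem stmt18 (c : ℕ) (hc : 2 ≤ c) (π : Equiv.Perm (Fin c)) :
    (Iperm π ++ (Iperm π).reverse).Sublist (rep (Ic c) c ++ Dc c) ↔
      π ⟨0, by omega⟩ < π ⟨1, by omega⟩ := by
  obtain ⟨n, rfl⟩ : ∃ n, c = n + 2 := ⟨c - 2, by omega⟩
  set A : ℕ := (π ⟨0, by omega⟩ : Fin (n+2)).val + 1 with hA
  set B : ℕ := (π ⟨1, by omega⟩ : Fin (n+2)).val + 1 with hB
  have hnd : (Iperm π).Nodup := by
    rw [Iperm, List.nodup_ofFn]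
    intro i j hij
    have hij' : (π i).val + 1 = (π j).val + 1 := hij
    exact π.injective (Fin.ext (by omega))
  have hlen : (Iperm π).length = n + 2 := by simp [Iperm]
  have hmem : ∀ x ∈ Iperm π, 1 ≤ x ∧ x ≤ n + 2 := by
    intro x hx
    simp only [Iperm, List.mem_ofFn, Set.mem_range] at hx
    obtain ⟨i, hi⟩ := hx
    have := (π i).isLt
    omega
  obtain ⟨x, y, r, hL⟩ : ∃ x y r, Iperm π = x :: y :: r := by
    cases h : Iperm π with
    | nil => rw [h] at hlen; simp at hlen
    | cons x t =>
      cases t with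
      | nil => rw [h] at hlen; simp at hlen
      | cons y r => exact ⟨x, y, r, rfl⟩
  have hgl : (Iperm π).length = n + 2 := hlen
  have hx : x = A := by
    have h1 : (Iperm π)[0]'(by omega) = x := by simp [hL]
    have h2 : (Iperm π)[0]'(by omega) = A := by
      simp only [Iperm, List.getElem_ofFn, hA]
    rw [h1] at h2
    exact h2
  have hy : y = B := by
    have h1 : (Iperm π)[1]'(by omega) = y := by simp [hL]
    have h2 : (Iperm π)[1]'(by omega) = B := by
      simp only [Iperm, List.getElem_ofFn, hB]
    rw [h1] at h2
    exact h2
  subst hx hy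
  set m : List ℕ := B :: r with hm
  have hmnd : m.Nodup := by
    have h := hnd; rw [hL] at h; exact h.of_cons
  have hmlen : m.length = n + 1 := by
    have h := hlen
    rw [hL] at h
    simp only [hm, List.length_cons] at h ⊢
    omega
  set W' : List ℕ := A :: (m ++ m.reverse) with hW'
  have hWrw : Iperm π ++ (Iperm π).reverse = W' ++ [A] := by
    rw [hL, hW']; simp [hm]
  have hW'nonAsc : nonAsc W' = (if B ≤ A then 1 else 0) + (n + 1) := by
    have h1 : W' = A :: B :: (r ++ m.reverse) := by rw [hW', hm]; simp
    rw [h1, nonAsc_cons_cons]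
    have h2 : B :: (r ++ m.reverse) = m ++ m.reverse := by rw [hm]; simp
    rw [h2, nonAsc_palindrome m hmnd (by rw [hm]; simp), hmlen]
  constructor
  · intro hsub
    rw [hWrw, List.sublist_append_iff] at hsub
    obtain ⟨w1, w2, hspl, h1, h2⟩ := hsub
    by_contra hcon
    have hne : (π ⟨0, by omega⟩ : Fin (n+2)) ≠ π ⟨1, by omega⟩ := by
      intro h
      have := π.injective h
      simp [Fin.ext_iff] at this
    have hBA : B < A := by
      rw [Fin.lt_def] at hcon
      rw [Fin.ne_iff_vne] at hne
      omega
    have hpal : (W' ++ [A]).reverse = W' ++ [A] := by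
      rw [hW']; simp [List.reverse_append]
    have hW2 : W' ++ [A] = w2.reverse ++ w1.reverse := by
      calc W' ++ [A] = (w1 ++ w2).reverse := by rw [← hspl, hpal]
        _ = w2.reverse ++ w1.reverse := by simp
    have h2r : w2.reverse.Sublist (Ic (n+2)) := by
      have h3 := h2.reverse
      rwa [Dc, List.reverse_reverse] at h3
    rcases hw2 : w2.reverse with _ | ⟨x, xs⟩
    · have hw2nil : w2 = [] := by
        have := congrArg List.reverse hw2; simpa using this
      rw [hw2nil, List.append_nil] at hspl
      have hlt := nonAsc_lt_of_sublist_rep (n+2) (n+2) w1 (by rw [← hspl]; simp) h1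
      have hge : nonAsc W' ≤ nonAsc w1 := by
        rw [← hspl]; exact nonAsc_prefix_le W' [A]
      rw [hW'nonAsc, if_pos (le_of_lt hBA)] at hge
      omega
    · rcases xs with _ | ⟨y, ys⟩
      · have hw2x : w2 = [x] := by
          have := congrArg List.reverse hw2; simpa using this
        rw [hw2x] at hspl
        obtain ⟨hw1, -⟩ := List.append_inj' hspl (by simp)
        have hlt := nonAsc_lt_of_sublist_rep (n+2) (n+2) w1 (by rw [← hw1]; simp) h1
        rw [← hw1, hW'nonAsc, if_pos (le_of_lt hBA)] at hlt
        omega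
      · have hchain : x < y := by
          have hp := (pairwise_Ic (n+2)).sublist h2r
          rw [hw2] at hp
          exact List.rel_of_pairwise_cons hp (by simp)
        rw [hw2] at hW2
        have hAB2 : W' ++ [A] = A :: B :: ((r ++ m.reverse) ++ [A]) := by
          rw [hW', hm]; simp
        rw [hAB2, List.cons_append, List.cons_append] at hW2
        simp only [List.cons.injEq] at hW2
        omega
  · intro hlt
    have hBA : ¬ (B ≤ A) := by
      rw [Fin.lt_def] at hlt
      omega
    have hmemW' : ∀ x ∈ W', 1 ≤ x ∧ x ≤ n+2 := by
      intro x hx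
      rw [hW'] at hx
      refine hmem x ?_
      rw [hL]
      rcases List.mem_cons.mp hx with h | h
      · exact h ▸ List.mem_cons_self
      · rcases List.mem_append.mp h with h' | h'
        · exact List.mem_cons_of_mem _ h'
        · exact List.mem_cons_of_mem _ (List.mem_reverse.mp h')
    have hemb := embed_aux (n+2) W' hmemW' 0
    have hextra : extra W' 0 = 0 := by
      rw [hW']
      show (if A ≤ 0 then 1 else 0) = 0
      rw [if_neg (by omega)]
    rw [hextra, Nat.add_zero, hW'nonAsc, if_neg hBA] at hemb
    have hIc : List.range' (0+1) (n+2-0) = Ic (n+2) := by norm_num [Ic]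
    rw [hIc, ← rep_succ] at hemb
    rw [show 0 + (n + 1) + 0 + 1 = n + 2 from by omega] at hemb
    rw [hWrw]
    refine List.Sublist.append hemb ?_
    rw [List.singleton_sublist, Dc, List.mem_reverse, Ic, List.mem_range'_1]
    omega
end
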